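/- arXiv:1206.0810 — 6 statements merged into one kernel-verified Lean document; each statement's English description precedes it below -/
import Mathlib

section
/- For ζ₁, ζ₂ ∈ ℂ with positive real parts, the complex Gaussian kernels satisfy the semigroup convolution identity χ_{ζ₁} * χ_{ζ₂} = χ_{ζ₁+ζ₂} on ℝⁿ. -/
open MeasureTheory Real

open scoped RealInnerProductSpace

open Complex in
lemma mul_cpow_of_pos_re {a b : ℂ} (ha : 0 < a.re) (hb : 0 < b.re) (s : ℂ) :
    (a * b) ^ s = a ^ s * b ^ s := by
  have ha0 : a ≠ 0 := fun h => by simp [h] at ha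
  have hb0 : b ≠ 0 := fun h => by simp [h] at hb
  have harg : arg a + arg b ∈ Set.Ioc (-π) π := by
    have h1 : |arg a| < π / 2 := abs_arg_lt_pi_div_two_iff.mpr (Or.inl ha)
    have h2 : |arg b| < π / 2 := abs_arg_lt_pi_div_two_iff.mpr (Or.inl hb)
    rw [abs_lt] at h1 h2
    constructor <;> [linarith; linarith]
  rw [cpow_def_of_ne_zero (mul_ne_zero ha0 hb0), cpow_def_of_ne_zero ha0,
    cpow_def_of_ne_zero hb0, ← Complex.exp_add, ← add_mul, Complex.log_mul ha0 hb0 harg]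

lemma inv_re_pos_of_re_pos {z : ℂ} (hz : 0 < z.re) : 0 < (z⁻¹).re := by
  rw [Complex.inv_re]
  exact div_pos hz (Complex.normSq_pos.mpr (fun h => by simp [h] at hz))

theorem gaussian_convolution_semigroup (n : ℕ) (ζ₁ ζ₂ : ℂ) (h₁ : 0 < ζ₁.re) (h₂ : 0 < ζ₂.re)
    (χ : ℂ → EuclideanSpace ℝ (Fin n) → ℂ)
    (hχ : ∀ ζ x, χ ζ x =
      (4 * (π : ℂ) * ζ) ^ (-(n : ℂ) / 2) * Complex.exp (-(‖x‖ : ℂ) ^ 2 / (4 * ζ)))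
    (x : EuclideanSpace ℝ (Fin n)) :
    ∫ y, χ ζ₁ (x - y) * χ ζ₂ y = χ (ζ₁ + ζ₂) x := by
  have hz1 : ζ₁ ≠ 0 := fun h => by simp [h] at h₁
  have hz2 : ζ₂ ≠ 0 := fun h => by simp [h] at h₂
  have h12 : 0 < (ζ₁ + ζ₂).re := by
    rw [Complex.add_re]; linarith
  have hz12 : ζ₁ + ζ₂ ≠ 0 := fun h => by simp [h] at h12
  set b : ℂ := (4 * ζ₁)⁻¹ + (4 * ζ₂)⁻¹ with hbdef
  have h4z1 : 0 < (4 * ζ₁).re := by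
    have : (4 * ζ₁).re = 4 * ζ₁.re := by simp [Complex.mul_re]
    rw [this]; linarith
  have h4z2 : 0 < (4 * ζ₂).re := by
    have : (4 * ζ₂).re = 4 * ζ₂.re := by simp [Complex.mul_re]
    rw [this]; linarith
  have hb : 0 < b.re := by
    rw [hbdef, Complex.add_re]
    exact add_pos (inv_re_pos_of_re_pos h4z1) (inv_re_pos_of_re_pos h4z2)
  have hbne : b ≠ 0 := fun h => by simp [h] at hb
  have hne1 : (4 : ℂ) * ζ₁ ≠ 0 := by simp [hz1]
  have hne2 : (4 : ℂ) * ζ₂ ≠ 0 := by simp [hz2]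
  have hne3 : (4 : ℂ) * ζ₁ * ζ₂ ≠ 0 := by simp [hz1, hz2]
  have hne4 : (2 : ℂ) * ζ₁ ≠ 0 := by simp [hz1]
  have hne5 : (4 : ℂ) * (ζ₁ + ζ₂) ≠ 0 := by simp [hz12]
  have hbval : b = (ζ₁ + ζ₂) / (4 * ζ₁ * ζ₂) := by
    rw [hbdef]; field_simp; ring
  set c : ℂ := (2 * ζ₁)⁻¹ with hcdef
  -- rewrite the integrand
  have hint : ∀ y : EuclideanSpace ℝ (Fin n),
      χ ζ₁ (x - y) * χ ζ₂ y =
      ((4 * (π : ℂ) * ζ₁) ^ (-(n : ℂ) / 2) * (4 * (π : ℂ) * ζ₂) ^ (-(n : ℂ) / 2) *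
        Complex.exp (-(‖x‖ : ℂ) ^ 2 / (4 * ζ₁))) *
      Complex.exp (-b * (‖y‖ : ℂ) ^ 2 + c * (⟪x, y⟫ : ℝ)) := by
    intro y
    rw [hχ, hχ]
    have hnorm : ((‖x - y‖ : ℝ) : ℂ) ^ 2 =
        ((‖x‖ : ℝ) : ℂ) ^ 2 - 2 * ((⟪x, y⟫ : ℝ) : ℂ) + ((‖y‖ : ℝ) : ℂ) ^ 2 := by
      have := norm_sub_sq_real x y
      norm_cast
    have hexps : -((‖x - y‖ : ℝ) : ℂ) ^ 2 / (4 * ζ₁) + -((‖y‖ : ℝ) : ℂ) ^ 2 / (4 * ζ₂) =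
        -((‖x‖ : ℝ) : ℂ) ^ 2 / (4 * ζ₁) + (-b * ((‖y‖ : ℝ) : ℂ) ^ 2 + c * ((⟪x, y⟫ : ℝ) : ℂ)) := by
      rw [hnorm, hbval, hcdef]
      field_simp [hne1, hne2, hne3, hne4, hne5, hz12]
      ring
    rw [mul_mul_mul_comm, ← Complex.exp_add, hexps, Complex.exp_add, ← mul_assoc]
  rw [integral_congr_ae (Filter.Eventually.of_forall hint)]
  rw [MeasureTheory.integral_const_mul]
  rw [GaussianFourier.integral_cexp_neg_mul_sq_norm_add hb c x]
  rw [hχ, finrank_euclideanSpace_fin]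
  -- now pure algebra with cpow and exp
  have hDpos : 0 < ((π : ℂ) / b).re := by
    rw [div_eq_mul_inv]
    have : ((π : ℂ) * b⁻¹).re = π * (b⁻¹).re := by simp [Complex.mul_re]
    rw [this]
    exact mul_pos Real.pi_pos (inv_re_pos_of_re_pos hb)
  have hApos : 0 < (4 * (π : ℂ) * ζ₁).re := by
    have : (4 * (π : ℂ) * ζ₁).re = 4 * π * ζ₁.re := by simp [Complex.mul_re]
    rw [this]; positivity
  have hBpos : 0 < (4 * (π : ℂ) * ζ₂).re := by
    have : (4 * (π : ℂ) * ζ₂).re = 4 * π * ζ₂.re := by simp [Complex.mul_re]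
    rw [this]; positivity
  have hCpos : 0 < (4 * (π : ℂ) * (ζ₁ + ζ₂)).re := by
    have : (4 * (π : ℂ) * (ζ₁ + ζ₂)).re = 4 * π * (ζ₁ + ζ₂).re := by simp [Complex.mul_re]
    rw [this]; positivity
  have hpine : (π : ℂ) ≠ 0 := Complex.ofReal_ne_zero.mpr Real.pi_ne_zero
  have hABCD : (4 * (π : ℂ) * ζ₁) * (4 * (π : ℂ) * ζ₂) =
      (4 * (π : ℂ) * (ζ₁ + ζ₂)) * ((π : ℂ) / b) := by
    rw [hbval]
    field_simp [hne1, hne2, hne3, hne4, hne5, hz12]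
  have hconst : (4 * (π : ℂ) * ζ₁) ^ (-(n : ℂ) / 2) * (4 * (π : ℂ) * ζ₂) ^ (-(n : ℂ) / 2) *
      ((π : ℂ) / b) ^ ((n : ℂ) / 2) = (4 * (π : ℂ) * (ζ₁ + ζ₂)) ^ (-(n : ℂ) / 2) := by
    have hns : -(n : ℂ) / 2 = -((n : ℂ) / 2) := by ring
    have hDne0 : (π : ℂ) / b ≠ 0 := fun h => by simp [h] at hDpos
    have hDne : ((π : ℂ) / b) ^ ((n : ℂ) / 2) ≠ 0 := by
      simp [Complex.cpow_eq_zero_iff, hDne0]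
    rw [hns, Complex.cpow_neg, Complex.cpow_neg, Complex.cpow_neg,
      ← mul_inv, ← mul_cpow_of_pos_re hApos hBpos, hABCD,
      mul_cpow_of_pos_re hCpos hDpos, mul_inv, mul_assoc,
      inv_mul_cancel₀ hDne, mul_one]
  have hexp : Complex.exp (-(‖x‖ : ℂ) ^ 2 / (4 * ζ₁)) *
      Complex.exp (c ^ 2 * (‖x‖ : ℂ) ^ 2 / (4 * b)) =
      Complex.exp (-(‖x‖ : ℂ) ^ 2 / (4 * (ζ₁ + ζ₂))) := by
    rw [← Complex.exp_add]
    congr 1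
    rw [hbval, hcdef]
    field_simp [hne1, hne2, hne3, hne4, hne5, hz12]
    ring
  calc (4 * (π : ℂ) * ζ₁) ^ (-(n : ℂ) / 2) * (4 * (π : ℂ) * ζ₂) ^ (-(n : ℂ) / 2) *
        Complex.exp (-(‖x‖ : ℂ) ^ 2 / (4 * ζ₁)) *
        (((π : ℂ) / b) ^ ((n : ℂ) / 2) * Complex.exp (c ^ 2 * (‖x‖ : ℂ) ^ 2 / (4 * b)))
      = ((4 * (π : ℂ) * ζ₁) ^ (-(n : ℂ) / 2) * (4 * (π : ℂ) * ζ₂) ^ (-(n : ℂ) / 2) *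
          ((π : ℂ) / b) ^ ((n : ℂ) / 2)) *
        (Complex.exp (-(‖x‖ : ℂ) ^ 2 / (4 * ζ₁)) *
          Complex.exp (c ^ 2 * (‖x‖ : ℂ) ^ 2 / (4 * b))) := by ring
    _ = _ := by rw [hconst, hexp]
end

section
/- Let w(x) = (1+‖x‖)^k with k ≥ 0, f : ℝⁿ → Y with f/w ∈ L^p(ℝⁿ, Y), and g : ℝⁿ → ℂ with w·g ∈ L^q(ℝⁿ, ℂ), where 1/p + 1/q = 1, 1 ≤ p ≤ ∞. Then for every x ∈ ℝⁿ the Bochner integral (g*f)(x) = ∫ g(x−y) f(y) dy exists, and ‖(g*f)(x)‖ ≤ w(x) · ‖w g‖_{L^q} · ‖f/w‖_{L^p}. -/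
open MeasureTheory Real Filter
open scoped ENNReal

set_option maxHeartbeats 1000000 in
theorem weighted_convolution_exists_and_bound (n : ℕ) (k : ℝ) (hk : 0 ≤ k)
    {Y : Type*} [NormedAddCommGroup Y] [NormedSpace ℂ Y] [CompleteSpace Y]
    (w : EuclideanSpace ℝ (Fin n) → ℝ) (hw : ∀ x, w x = (1 + ‖x‖) ^ k)
    (p q : ℝ≥0∞) (hpq : p⁻¹ + q⁻¹ = 1) (hp : 1 ≤ p)
    (f : EuclideanSpace ℝ (Fin n) → Y) (hf : AEStronglyMeasurable f volume)
    (g : EuclideanSpace ℝ (Fin n) → ℂ) (hg : AEStronglyMeasurable g volume)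
    (hfw : MemLp (fun x => ((w x)⁻¹ : ℂ) • f x) p volume)
    (hwg : MemLp (fun x => (w x : ℂ) * g x) q volume)
    (x : EuclideanSpace ℝ (Fin n)) :
    Integrable (fun y => g (x - y) • f y) volume ∧
      ‖∫ y, g (x - y) • f y‖ ≤
        w x * (eLpNorm (fun x => (w x : ℂ) * g x) q volume).toReal *
          (eLpNorm (fun x => ((w x)⁻¹ : ℂ) • f x) p volume).toReal := by
  have hwpos : ∀ z, 0 < w z := fun z => by
    rw [hw]; positivity
  have hmp : MeasurePreserving (fun y : EuclideanSpace ℝ (Fin n) => x - y) volume volume :=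
    Measure.measurePreserving_sub_left volume x
  set G : EuclideanSpace ℝ (Fin n) → ℂ := fun y => (w (x - y) : ℂ) * g (x - y) with hG
  set F : EuclideanSpace ℝ (Fin n) → Y := fun y => ((w y)⁻¹ : ℂ) • f y with hF
  have hGmem : MemLp G q volume := hwg.comp_measurePreserving hmp
  haveI hHT : ENNReal.HolderTriple q p 1 := ⟨by rw [inv_one, add_comm, hpq]⟩
  have hGF : MemLp (G • F) 1 volume := by
    exact hfw.smul hGmem
  have hGFint : Integrable (G • F) volume := memLp_one_iff_integrable.mp hGF
  -- pointwise bound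
  have hbound : ∀ y, ‖g (x - y) • f y‖ ≤ w x * ‖(G • F) y‖ := by
    intro y
    have hwle : w y ≤ w x * w (x - y) := by
      rw [hw, hw, hw, ← Real.mul_rpow (by positivity) (by positivity)]
      refine Real.rpow_le_rpow (by positivity) ?_ hk
      have := norm_sub_norm_le y (x - y)
      have h2 : ‖y - (x - y)‖ ≥ 0 := norm_nonneg _
      have h3 : ‖y‖ ≤ ‖x - y‖ + ‖x‖ := by
        calc ‖y‖ = ‖x - (x - y)‖ := by congr 1; abel
        _ ≤ ‖x‖ + ‖x - y‖ := norm_sub_le _ _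
        _ = ‖x - y‖ + ‖x‖ := by ring
      nlinarith [norm_nonneg x, norm_nonneg (x - y)]
    have h1 : ‖(G • F) y‖ = w (x - y) * ‖g (x - y)‖ * ((w y)⁻¹ * ‖f y‖) := by
      simp only [Pi.smul_apply', hG, hF, norm_smul, norm_mul, norm_inv, Complex.norm_real,
        Real.norm_eq_abs, abs_of_pos (hwpos (x - y)), abs_of_pos (hwpos y)]
    rw [norm_smul, h1]
    have hy := hwpos y
    have hxy := hwpos (x - y)
    rw [← sub_nonneg]
    have : w x * (w (x - y) * ‖g (x - y)‖ * ((w y)⁻¹ * ‖f y‖)) - ‖g (x - y)‖ * ‖f y‖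
        = (w x * w (x - y) * (w y)⁻¹ - 1) * (‖g (x - y)‖ * ‖f y‖) := by ring
    rw [this]
    apply mul_nonneg _ (by positivity)
    rw [sub_nonneg, ← div_eq_mul_inv, le_div_iff₀ hy, one_mul]
    exact hwle
  have hint : Integrable (fun y => g (x - y) • f y) volume := by
    refine Integrable.mono (hGFint.norm.const_mul (w x)) ?_ ?_
    · exact ((hg.comp_measurePreserving hmp).smul hf)
    · filter_upwards with y
      simpa [abs_of_pos (hwpos x), abs_of_nonneg (norm_nonneg ((G • F) y))] using hbound y
  refine ⟨hint, ?_⟩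
  have hHolder : eLpNorm (G • F) 1 volume ≤ eLpNorm G q volume * eLpNorm F p volume := by
    exact eLpNorm_smul_le_mul_eLpNorm hfw.1 hGmem.1
  have hGq : eLpNorm G q volume = eLpNorm (fun x => (w x : ℂ) * g x) q volume := by
    rw [show G = (fun z => ((w z : ℂ) * g z)) ∘ (fun y => x - y) from rfl]
    exact eLpNorm_comp_measurePreserving hwg.1 hmp
  calc ‖∫ y, g (x - y) • f y‖ ≤ ∫ y, ‖g (x - y) • f y‖ := norm_integral_le_integral_norm _
    _ ≤ ∫ y, w x * ‖(G • F) y‖ := by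
        refine integral_mono hint.norm (hGFint.norm.const_mul (w x)) hbound
    _ = w x * ∫ y, ‖(G • F) y‖ := integral_const_mul _ _
    _ = w x * (eLpNorm (G • F) 1 volume).toReal := by
        rw [integral_norm_eq_lintegral_enorm hGFint.1, eLpNorm_one_eq_lintegral_enorm]
    _ ≤ w x * ((eLpNorm G q volume).toReal * (eLpNorm F p volume).toReal) := by
        refine mul_le_mul_of_nonneg_left ?_ (hwpos x).le
        rw [← ENNReal.toReal_mul]
        exact ENNReal.toReal_mono (ENNReal.mul_ne_top hGmem.eLpNorm_ne_top hfw.eLpNorm_ne_top)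
          hHolder
    _ = w x * (eLpNorm (fun x => (w x : ℂ) * g x) q volume).toReal *
          (eLpNorm (fun x => ((w x)⁻¹ : ℂ) • f x) p volume).toReal := by
        rw [hGq]; ring
end

section
/- If f/w ∈ L^p(ℝⁿ, Y) with 1 < p < ∞ and w·g ∈ L^q(ℝⁿ, ℂ) with q the conjugate exponent, then (g*f)/w ∈ C₀(ℝⁿ, Y), i.e., (g*f)(x)/w(x) → 0 as ‖x‖ → ∞. -/
open MeasureTheory Real Filter
open scoped ENNReal Pointwise

-- helper: Hölder for translated product
lemma conv_holder {X : Type*} [NormedAddCommGroup X] [MeasurableSpace X] [BorelSpace X]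
    {Y : Type*} [NormedAddCommGroup Y]
    (μ : Measure X) [μ.IsAddLeftInvariant] [μ.IsNegInvariant]
    {p q : ℝ≥0∞} (hpq : (1:ℝ≥0∞)/1 = 1/q + 1/p)
    {A : X → ℂ} (hA : AEStronglyMeasurable A μ)
    {B : X → Y} (hB : AEStronglyMeasurable B μ) (x : X) :
    ∫⁻ y, (‖A (x - y)‖₊ : ℝ≥0∞) * ‖B y‖₊ ∂μ ≤ eLpNorm A q μ * eLpNorm B p μ := by
  have hmp : MeasurePreserving (fun y => x - y) μ μ := Measure.measurePreserving_sub_left μ x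
  have hA' : AEStronglyMeasurable (fun y => A (x - y)) μ :=
    hA.comp_quasiMeasurePreserving hmp.quasiMeasurePreserving
  haveI : ENNReal.HolderTriple q p 1 := ⟨by simpa [one_div] using hpq.symm⟩
  have key := eLpNorm_le_eLpNorm_mul_eLpNorm'_of_norm (p := q) (q := p) (r := 1) hA' hB (fun c v => ‖c‖ * ‖v‖) 1
      (Eventually.of_forall fun y => by
        simp [abs_of_nonneg, mul_nonneg (norm_nonneg _) (norm_nonneg _)])
  rw [ENNReal.coe_one, one_mul] at key
  rw [eLpNorm_one_eq_lintegral_enorm] at key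
  have h1 : ∫⁻ y, (‖A (x - y)‖₊ : ℝ≥0∞) * ‖B y‖₊ ∂μ
      = ∫⁻ y, (‖(‖A (x - y)‖ * ‖B y‖)‖₊ : ℝ≥0∞) ∂μ := by
    refine lintegral_congr fun y => ?_
    rw [nnnorm_mul, nnnorm_norm, nnnorm_norm, ENNReal.coe_mul]
  have h2 : eLpNorm (fun y => A (x - y)) q μ = eLpNorm A q μ :=
    eLpNorm_comp_measurePreserving hA hmp
  rw [h1]
  exact key.trans (le_of_eq (by rw [h2]))

lemma key_ineq {a b c s t : ℝ} (ha : 0 < a) (hb : 0 < b) (hc : 0 < c)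
    (hbac : b ≤ a * c) (hs : 0 ≤ s) (ht : 0 ≤ t) :
    a⁻¹ * (s * t) ≤ (c * s) * (b⁻¹ * t) := by
  have h1 : a⁻¹ ≤ c * b⁻¹ := by
    rw [inv_le_iff_one_le_mul₀ ha]
    have hrw : c * b⁻¹ * a = (a * c) / b := by field_simp
    rw [hrw, le_div_iff₀ hb, one_mul]
    exact hbac
  calc a⁻¹ * (s * t) = (s * t) * a⁻¹ := by ring
    _ ≤ (s * t) * (c * b⁻¹) := mul_le_mul_of_nonneg_left h1 (mul_nonneg hs ht)
    _ = (c * s) * (b⁻¹ * t) := by ring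

set_option maxHeartbeats 1000000 in
theorem weighted_convolution_c0 (n : ℕ) (k : ℝ) (hk : 0 ≤ k)
    {Y : Type*} [NormedAddCommGroup Y] [NormedSpace ℂ Y] [CompleteSpace Y]
    (w : EuclideanSpace ℝ (Fin n) → ℝ) (hw : ∀ x, w x = (1 + ‖x‖) ^ k)
    (p q : ℝ≥0∞) (hpq : p⁻¹ + q⁻¹ = 1) (hp : 1 < p) (hp' : p ≠ ∞)
    (f : EuclideanSpace ℝ (Fin n) → Y) (hf : AEStronglyMeasurable f volume)
    (g : EuclideanSpace ℝ (Fin n) → ℂ) (hg : AEStronglyMeasurable g volume)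
    (hfw : MemLp (fun x => ((w x)⁻¹ : ℂ) • f x) p volume)
    (hwg : MemLp (fun x => (w x : ℂ) * g x) q volume) :
    Tendsto (fun x => ((w x)⁻¹ : ℂ) • ∫ y, g (x - y) • f y)
      (Filter.cocompact (EuclideanSpace ℝ (Fin n))) (nhds 0) := by
  set F : EuclideanSpace ℝ (Fin n) → Y := fun x => ((w x)⁻¹ : ℂ) • f x with hFdef
  set G : EuclideanSpace ℝ (Fin n) → ℂ := fun x => (w x : ℂ) * g x with hGdef
  have hw1 : ∀ x, 1 ≤ w x := fun x => by
    rw [hw x]; exact Real.one_le_rpow (by linarith [norm_nonneg x]) hk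
  have hw0 : ∀ x, 0 < w x := fun x => lt_of_lt_of_le one_pos (hw1 x)
  have hwm : ∀ x y, w y ≤ w x * w (x - y) := by
    intro x y
    rw [hw x, hw y, hw (x - y), ← Real.mul_rpow (by positivity) (by positivity)]
    refine Real.rpow_le_rpow (by positivity) ?_ hk
    have h2 : ‖y‖ ≤ ‖x‖ + ‖x - y‖ := by
      have := norm_sub_le x (x - y); rwa [sub_sub_cancel] at this
    nlinarith [norm_nonneg x, norm_nonneg (x - y)]
  -- q facts
  have hp1 : p⁻¹ < 1 := by
    have := ENNReal.inv_lt_one.2 hp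
    exact this
  have hq_inv_ne : q⁻¹ ≠ 0 := by
    intro h; rw [h, add_zero] at hpq; exact hp1.ne hpq
  have hq_ne_top : q ≠ ∞ := by
    simpa [ENNReal.inv_ne_zero] using hq_inv_ne
  have hq1 : 1 ≤ q := by
    have : q⁻¹ ≤ 1 := by rw [← hpq]; exact le_add_self
    exact ENNReal.inv_le_one.1 this
  have hpq' : (1:ℝ≥0∞)/1 = 1/q + 1/p := by
    rw [one_div, one_div, one_div, inv_one, add_comm (q⁻¹) (p⁻¹), hpq]
  -- pointwise bound for the nnnorm
  set Φ : EuclideanSpace ℝ (Fin n) → ℝ≥0∞ :=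
    fun x => ∫⁻ y, (‖G (x - y)‖₊ : ℝ≥0∞) * ‖F y‖₊ with hΦdef
  have hbound : ∀ x, (‖((w x)⁻¹ : ℂ) • ∫ y, g (x - y) • f y‖₊ : ℝ≥0∞) ≤ Φ x := by
    intro x
    calc (‖((w x)⁻¹ : ℂ) • ∫ y, g (x - y) • f y‖₊ : ℝ≥0∞)
        = (‖((w x)⁻¹ : ℂ)‖₊ : ℝ≥0∞) * ‖∫ y, g (x - y) • f y‖₊ := by
          simp [nnnorm_smul, ENNReal.coe_mul]
      _ ≤ (‖((w x)⁻¹ : ℂ)‖₊ : ℝ≥0∞) * ∫⁻ y, ‖g (x - y) • f y‖₊ :=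
          mul_le_mul_right (enorm_integral_le_lintegral_enorm _) _
      _ = ∫⁻ y, (‖((w x)⁻¹ : ℂ)‖₊ : ℝ≥0∞) * ‖g (x - y) • f y‖₊ :=
          (lintegral_const_mul' _ _ ENNReal.coe_ne_top).symm
      _ ≤ Φ x := by
          refine lintegral_mono fun y => ?_
          rw [← ENNReal.coe_mul, ← ENNReal.coe_mul, ENNReal.coe_le_coe,
            ← NNReal.coe_le_coe]
          push_cast
          have e1 : ‖((w x)⁻¹ : ℂ)‖ = (w x)⁻¹ := by
            rw [← Complex.ofReal_inv, Complex.norm_real, Real.norm_eq_abs,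
              abs_of_pos (inv_pos.2 (hw0 x))]
          have e2 : ‖G (x - y)‖ = w (x - y) * ‖g (x - y)‖ := by
            rw [hGdef]; simp only []
            rw [norm_mul, Complex.norm_real, Real.norm_eq_abs, abs_of_pos (hw0 _)]
          have e3 : ‖F y‖ = (w y)⁻¹ * ‖f y‖ := by
            rw [hFdef]; simp only []
            rw [norm_smul, ← Complex.ofReal_inv, Complex.norm_real, Real.norm_eq_abs,
              abs_of_pos (inv_pos.2 (hw0 y))]
          rw [e1, e2, e3, norm_smul]
          exact key_ineq (hw0 x) (hw0 y) (hw0 (x - y)) (hwm x y) (norm_nonneg _) (norm_nonneg _)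
  -- Tendsto Φ cocompact 0
  have hΦ0 : Tendsto Φ (Filter.cocompact (EuclideanSpace ℝ (Fin n))) (nhds 0) := by
    rw [ENNReal.tendsto_nhds_zero]
    intro ε hε
    set C : ℝ≥0∞ := eLpNorm F p volume + eLpNorm G q volume + 2 with hCdef
    have hC_top : C ≠ ∞ := by
      simp only [hCdef]
      exact ENNReal.add_ne_top.2 ⟨ENNReal.add_ne_top.2 ⟨hfw.eLpNorm_ne_top, hwg.eLpNorm_ne_top⟩,
        ENNReal.ofNat_ne_top⟩
    have hC0 : C ≠ 0 := by
      intro h0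
      have h2 : (2:ℝ≥0∞) ≤ C := le_add_self
      rw [h0] at h2
      simp at h2
    set δ : ℝ≥0∞ := min 1 (ε / C) with hδdef
    have hδ0 : δ ≠ 0 := by
      simp only [hδdef, ne_eq, min_eq_iff]
      intro h
      rcases h with ⟨h, -⟩ | ⟨h, -⟩
      · exact one_ne_zero h
      · exact (ENNReal.div_pos hε.ne' hC_top).ne' h
    obtain ⟨F₀, hF₀supp, hF₀close, hF₀cont, hF₀mem⟩ :=
      hfw.exists_hasCompactSupport_eLpNorm_sub_le hp' hδ0
    obtain ⟨G₀, hG₀supp, hG₀close, hG₀cont, hG₀mem⟩ :=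
      hwg.exists_hasCompactSupport_eLpNorm_sub_le hq_ne_top hδ0
    have hK : IsCompact (tsupport G₀ + tsupport F₀) :=
      IsCompact.add (hG₀supp : IsCompact (tsupport G₀)) (hF₀supp : IsCompact (tsupport F₀))
    filter_upwards [hK.compl_mem_cocompact] with x hx
    -- measurability
    have hGm : AEStronglyMeasurable G volume := hwg.1
    have hFm : AEStronglyMeasurable F volume := hfw.1
    have hmp : MeasurePreserving (fun y => x - y)
        (volume : Measure (EuclideanSpace ℝ (Fin n))) volume :=
      Measure.measurePreserving_sub_left volume x
    have meas1 : AEMeasurable (fun y => (‖(G - G₀) (x - y)‖₊ : ℝ≥0∞) * ‖F y‖₊) volume := by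
      exact (((hGm.sub hG₀cont.aestronglyMeasurable).comp_quasiMeasurePreserving
        hmp.quasiMeasurePreserving).enorm).mul hFm.enorm
    have meas2 : AEMeasurable (fun y => (‖G₀ (x - y)‖₊ : ℝ≥0∞) * ‖(F - F₀) y‖₊) volume := by
      exact ((hG₀cont.aestronglyMeasurable.comp_quasiMeasurePreserving
        hmp.quasiMeasurePreserving).enorm).mul (hFm.sub hF₀cont.aestronglyMeasurable).enorm
    -- third term vanishes
    have hthird : ∫⁻ y, (‖G₀ (x - y)‖₊ : ℝ≥0∞) * ‖F₀ y‖₊ = 0 := by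
      have hz : ∀ y, (‖G₀ (x - y)‖₊ : ℝ≥0∞) * ‖F₀ y‖₊ = 0 := by
        intro y
        by_contra h
        have hg0 : G₀ (x - y) ≠ 0 := by
          intro h'; apply h; simp [h']
        have hf0 : F₀ y ≠ 0 := by
          intro h'; apply h; simp [h']
        exact hx ⟨x - y, subset_tsupport _ hg0, y, subset_tsupport _ hf0, sub_add_cancel x y⟩
      rw [lintegral_congr hz, lintegral_zero]
    have split : Φ x ≤ (∫⁻ y, (‖(G - G₀) (x - y)‖₊ : ℝ≥0∞) * ‖F y‖₊) +
        ((∫⁻ y, (‖G₀ (x - y)‖₊ : ℝ≥0∞) * ‖(F - F₀) y‖₊) +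
          ∫⁻ y, (‖G₀ (x - y)‖₊ : ℝ≥0∞) * ‖F₀ y‖₊) := by
      rw [hΦdef]
      calc ∫⁻ y, (‖G (x - y)‖₊ : ℝ≥0∞) * ‖F y‖₊
          ≤ ∫⁻ y, ((‖(G - G₀) (x - y)‖₊ : ℝ≥0∞) * ‖F y‖₊ +
              ((‖G₀ (x - y)‖₊ : ℝ≥0∞) * ‖(F - F₀) y‖₊ +
                (‖G₀ (x - y)‖₊ : ℝ≥0∞) * ‖F₀ y‖₊)) := by
            refine lintegral_mono fun y => ?_
            have t1 : (‖G (x - y)‖₊ : ℝ≥0∞) ≤ ‖(G - G₀) (x - y)‖₊ + ‖G₀ (x - y)‖₊ := by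
              rw [← ENNReal.coe_add, ENNReal.coe_le_coe]
              simpa using nnnorm_add_le ((G - G₀) (x - y)) (G₀ (x - y))
            have t2 : (‖F y‖₊ : ℝ≥0∞) ≤ ‖(F - F₀) y‖₊ + ‖F₀ y‖₊ := by
              rw [← ENNReal.coe_add, ENNReal.coe_le_coe]
              simpa using nnnorm_add_le ((F - F₀) y) (F₀ y)
            calc (‖G (x - y)‖₊ : ℝ≥0∞) * ‖F y‖₊
                ≤ ((‖(G - G₀) (x - y)‖₊ : ℝ≥0∞) + ‖G₀ (x - y)‖₊) * ‖F y‖₊ :=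
                  mul_le_mul_left t1 _
              _ = (‖(G - G₀) (x - y)‖₊ : ℝ≥0∞) * ‖F y‖₊ +
                  (‖G₀ (x - y)‖₊ : ℝ≥0∞) * ‖F y‖₊ := add_mul _ _ _
              _ ≤ (‖(G - G₀) (x - y)‖₊ : ℝ≥0∞) * ‖F y‖₊ +
                  ((‖G₀ (x - y)‖₊ : ℝ≥0∞) * ‖(F - F₀) y‖₊ +
                    (‖G₀ (x - y)‖₊ : ℝ≥0∞) * ‖F₀ y‖₊) := by
                  refine add_le_add_right ?_ _
                  rw [← mul_add]
                  exact mul_le_mul_right t2 _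
        _ = _ := by
            rw [lintegral_add_left' meas1, lintegral_add_left' meas2]
    -- Hölder bounds
    have hb1 : (∫⁻ y, (‖(G - G₀) (x - y)‖₊ : ℝ≥0∞) * ‖F y‖₊) ≤ δ * eLpNorm F p volume :=
      le_trans (conv_holder volume hpq' (hGm.sub hG₀cont.aestronglyMeasurable) hFm x)
        (mul_le_mul_left hG₀close _)
    have hb2 : (∫⁻ y, (‖G₀ (x - y)‖₊ : ℝ≥0∞) * ‖(F - F₀) y‖₊)
        ≤ (eLpNorm G q volume + δ) * δ := by
      refine le_trans (conv_holder volume hpq' hG₀cont.aestronglyMeasurable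
        (hFm.sub hF₀cont.aestronglyMeasurable) x) ?_
      refine mul_le_mul' ?_ hF₀close
      have hG₀eq : eLpNorm G₀ q volume = eLpNorm (G - (G - G₀)) q volume := by
        congr 1; ext y; simp
      rw [hG₀eq]
      refine le_trans (eLpNorm_sub_le hGm (hGm.sub hG₀cont.aestronglyMeasurable) hq1) ?_
      exact add_le_add_right hG₀close _
    refine le_trans split ?_
    have hδ1 : δ ≤ 1 := min_le_left _ _
    have hδε : δ ≤ ε / C := min_le_right _ _
    calc (∫⁻ y, (‖(G - G₀) (x - y)‖₊ : ℝ≥0∞) * ‖F y‖₊) +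
        ((∫⁻ y, (‖G₀ (x - y)‖₊ : ℝ≥0∞) * ‖(F - F₀) y‖₊) +
          ∫⁻ y, (‖G₀ (x - y)‖₊ : ℝ≥0∞) * ‖F₀ y‖₊)
        ≤ δ * eLpNorm F p volume + ((eLpNorm G q volume + δ) * δ + 0) :=
          add_le_add hb1 (add_le_add hb2 (le_of_eq hthird))
      _ ≤ δ * (eLpNorm F p volume + eLpNorm G q volume + 1) := by
          rw [add_zero, add_mul]
          calc δ * eLpNorm F p volume + (eLpNorm G q volume * δ + δ * δ)
              ≤ δ * eLpNorm F p volume + (eLpNorm G q volume * δ + δ * 1) :=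
                add_le_add_right (add_le_add_right (mul_le_mul_right hδ1 δ) _) _
            _ = δ * (eLpNorm F p volume + eLpNorm G q volume + 1) := by ring
      _ ≤ (ε / C) * C := by
          refine mul_le_mul' hδε ?_
          rw [hCdef]
          exact add_le_add_right one_le_two _
      _ ≤ ε := le_of_eq (ENNReal.div_mul_cancel hC0 hC_top)
  -- conclude
  have : Tendsto (fun x => (‖((w x)⁻¹ : ℂ) • ∫ y, g (x - y) • f y‖₊ : ℝ≥0∞))
      (Filter.cocompact (EuclideanSpace ℝ (Fin n))) (nhds 0) := by
    refine tendsto_of_tendsto_of_tendsto_of_le_of_le tendsto_const_nhds hΦ0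
      (fun x => zero_le) hbound
  have h2 := ENNReal.tendsto_coe.1 this
  rw [tendsto_zero_iff_norm_tendsto_zero]
  have h3 := (NNReal.tendsto_coe (f := Filter.cocompact (EuclideanSpace ℝ (Fin n)))).2 h2
  simpa [coe_nnnorm] using h3
end

section
/- If f/w ∈ L^p(ℝⁿ, Y) with 1 ≤ p < ∞ and w·g ∈ L^1(ℝⁿ, ℂ), then (g*f)(x) exists as a Bochner integral for almost every x ∈ ℝⁿ, (g*f)/w ∈ L^p(ℝⁿ, Y), and ‖(g*f)/w‖_{L^p} ≤ ‖w g‖_{L^1} · ‖f/w‖_{L^p}. -/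
open MeasureTheory Real Filter
open scoped ENNReal

lemma young_aux (n : ℕ) (G F : EuclideanSpace ℝ (Fin n) → ℝ≥0∞)
    (hG : Measurable G) (hF : Measurable F) {r : ℝ} (hr : 1 ≤ r) :
    ∫⁻ x, (∫⁻ y, G (x - y) * F y ∂volume) ^ r ∂volume ≤
      (∫⁻ z, G z ∂volume) ^ r * ∫⁻ y, F y ^ r ∂volume := by
  set μ : Measure (EuclideanSpace ℝ (Fin n)) := volume with hμ
  have hr0 : (0:ℝ) < r := lt_of_lt_of_le one_pos hr
  set A : ℝ≥0∞ := ∫⁻ z, G z ∂μ with hA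
  have hGsub : ∀ x : EuclideanSpace ℝ (Fin n), ∫⁻ y, G (x - y) ∂μ = A := fun x =>
    (Measure.measurePreserving_sub_left μ x).lintegral_comp hG
  have swap : ∀ Φ : EuclideanSpace ℝ (Fin n) → ℝ≥0∞, Measurable Φ →
      ∫⁻ x, ∫⁻ y, G (x - y) * Φ y ∂μ ∂μ = A * ∫⁻ y, Φ y ∂μ := by
    intro Φ hΦ
    have hm : Measurable (fun p : (EuclideanSpace ℝ (Fin n)) × (EuclideanSpace ℝ (Fin n)) =>
        G (p.1 - p.2) * Φ p.2) :=
      (hG.comp (measurable_fst.sub measurable_snd)).mul (hΦ.comp measurable_snd)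
    rw [lintegral_lintegral_swap hm.aemeasurable]
    have h1 : ∀ y : EuclideanSpace ℝ (Fin n), ∫⁻ x, G (x - y) * Φ y ∂μ = A * Φ y := by
      intro y
      have hm2 : Measurable fun x : EuclideanSpace ℝ (Fin n) => G (x - y) :=
        hG.comp (measurable_id.sub measurable_const)
      rw [lintegral_mul_const _ hm2, lintegral_sub_right_eq_self G y, mul_comm]
    simp_rw [h1]
    exact lintegral_const_mul A hΦ
  rcases eq_or_lt_of_le hr with hr1 | hr1
  · simp_rw [← hr1, ENNReal.rpow_one]
    exact le_of_eq (swap F hF)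
  by_cases hA0 : A = 0
  · have hzero : ∀ x : EuclideanSpace ℝ (Fin n), ∫⁻ y, G (x - y) * F y ∂μ = 0 := by
      intro x
      refine le_antisymm ?_ zero_le
      have hm2 : Measurable fun y : EuclideanSpace ℝ (Fin n) => G (x - y) :=
        hG.comp (measurable_const.sub measurable_id)
      calc ∫⁻ y, G (x - y) * F y ∂μ ≤ ∫⁻ y, G (x - y) * ⊤ ∂μ :=
            lintegral_mono fun y => mul_le_mul_right le_top _
        _ = A * ⊤ := by rw [lintegral_mul_const _ hm2, hGsub x]
        _ = 0 := by rw [hA0, zero_mul]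
    simp_rw [hzero, ENNReal.zero_rpow_of_pos hr0]
    simp
  by_cases hAtop : A = ⊤
  · by_cases hF0 : ∫⁻ y, F y ^ r ∂μ = 0
    · have hFz : F =ᵐ[μ] 0 := by
        have h2 := (lintegral_eq_zero_iff (hF.pow measurable_const)).mp hF0
        filter_upwards [h2] with y hy
        rcases (ENNReal.rpow_eq_zero_iff.mp hy) with ⟨h, _⟩ | ⟨_, hlt⟩
        · exact h
        · exact absurd hlt (not_lt.mpr hr0.le)
      have hzero : ∀ x : EuclideanSpace ℝ (Fin n), ∫⁻ y, G (x - y) * F y ∂μ = 0 := by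
        intro x
        have he : (fun y => G (x - y) * F y) =ᵐ[μ] (fun _ => 0) := by
          filter_upwards [hFz] with y hy
          simp only [Pi.zero_apply] at hy
          simp [hy]
        rw [lintegral_congr_ae he, lintegral_zero]
      simp_rw [hzero, ENNReal.zero_rpow_of_pos hr0]
      simp
    · rw [hAtop, ENNReal.top_rpow_of_pos hr0, ENNReal.top_mul hF0]
      exact le_top
  -- main case
  set q : ℝ := Real.conjExponent r with hqdef
  have hrq : r.HolderConjugate q := Real.HolderConjugate.conjExponent hr1
  have hq0 : q ≠ 0 := hrq.symm.ne_zero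
  have hr0' : r ≠ 0 := hrq.ne_zero
  have hsplit : ∀ a b : ℝ≥0∞, a * b = a ^ (1/q) * (a ^ (1/r) * b) := by
    intro a b
    rcases eq_or_ne a 0 with h | h
    · rw [h, ENNReal.zero_rpow_of_pos (one_div_pos.mpr hrq.symm.pos), zero_mul, zero_mul]
    rcases eq_or_ne a ⊤ with h' | h'
    · rcases eq_or_ne b 0 with hb | hb
      · simp [hb]
      · rw [h', ENNReal.top_rpow_of_pos (one_div_pos.mpr hrq.symm.pos),
          ENNReal.top_rpow_of_pos (one_div_pos.mpr hrq.pos), ENNReal.top_mul hb,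
          ENNReal.top_mul (by simp : (⊤:ℝ≥0∞) ≠ 0)]
    · rw [← mul_assoc, ← ENNReal.rpow_add _ _ h h']
      rw [show 1/q + 1/r = 1 by
        rw [one_div, one_div, add_comm]; exact hrq.inv_add_inv_eq_one]
      rw [ENNReal.rpow_one]
  have key : ∀ x : EuclideanSpace ℝ (Fin n),
      (∫⁻ y, G (x - y) * F y ∂μ) ^ r ≤ A ^ (r/q) * ∫⁻ y, G (x - y) * F y ^ r ∂μ := by
    intro x
    have hm2 : Measurable fun y : EuclideanSpace ℝ (Fin n) => G (x - y) :=
      hG.comp (measurable_const.sub measurable_id)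
    have hold : ∫⁻ y, G (x - y) * F y ∂μ ≤
        A ^ (1/q) * (∫⁻ y, G (x - y) * F y ^ r ∂μ) ^ (1/r) := by
      calc ∫⁻ y, G (x - y) * F y ∂μ
          = ∫⁻ y, (fun y => G (x - y) ^ (1/q)) y * (fun y => G (x - y) ^ (1/r) * F y) y ∂μ := by
            simp_rw [← hsplit]
        _ ≤ (∫⁻ y, G (x - y) ^ ((1/q) * q) ∂μ) ^ (1/q) *
              (∫⁻ y, (G (x - y) ^ (1/r) * F y) ^ r ∂μ) ^ (1/r) := by
            have := ENNReal.lintegral_mul_le_Lp_mul_Lq μ hrq.symm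
              (f := fun y => G (x - y) ^ (1/q)) (g := fun y => G (x - y) ^ (1/r) * F y)
              (hm2.pow measurable_const).aemeasurable
              ((hm2.pow measurable_const).mul hF).aemeasurable
            simpa [← ENNReal.rpow_mul] using this
        _ = A ^ (1/q) * (∫⁻ y, G (x - y) * F y ^ r ∂μ) ^ (1/r) := by
            rw [one_div_mul_cancel hq0]
            simp_rw [ENNReal.rpow_one, hGsub x,
              ENNReal.mul_rpow_of_nonneg _ _ hr0.le, ← ENNReal.rpow_mul,
              one_div_mul_cancel hr0', ENNReal.rpow_one]
    calc (∫⁻ y, G (x - y) * F y ∂μ) ^ r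
        ≤ (A ^ (1/q) * (∫⁻ y, G (x - y) * F y ^ r ∂μ) ^ (1/r)) ^ r :=
          ENNReal.rpow_le_rpow hold hr0.le
      _ = A ^ (r/q) * ∫⁻ y, G (x - y) * F y ^ r ∂μ := by
          rw [ENNReal.mul_rpow_of_nonneg _ _ hr0.le, ← ENNReal.rpow_mul, ← ENNReal.rpow_mul,
            one_div_mul_cancel hr0', ENNReal.rpow_one, one_div, inv_mul_eq_div]
  calc ∫⁻ x, (∫⁻ y, G (x - y) * F y ∂μ) ^ r ∂μ
      ≤ ∫⁻ x, A ^ (r/q) * ∫⁻ y, G (x - y) * F y ^ r ∂μ ∂μ := lintegral_mono key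
    _ = A ^ (r/q) * ∫⁻ x, ∫⁻ y, G (x - y) * F y ^ r ∂μ ∂μ :=
        lintegral_const_mul' _ _ (ENNReal.rpow_ne_top_of_nonneg (div_nonneg hr0.le hrq.symm.nonneg) hAtop)
    _ = A ^ (r/q) * (A * ∫⁻ y, F y ^ r ∂μ) := by
        rw [swap (fun y => F y ^ r) (hF.pow measurable_const)]
    _ = A ^ r * ∫⁻ y, F y ^ r ∂μ := by
        rw [← mul_assoc]
        congr 1
        have h2 : A ^ (r/q) * A = A ^ (r/q + 1) := by
          rw [ENNReal.rpow_add _ _ hA0 hAtop, ENNReal.rpow_one]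
        rw [h2]
        congr 1
        have h3 : r / q = r - 1 := by
          rw [hqdef, Real.conjExponent]
          field_simp
        rw [h3]; ring


theorem weighted_convolution_Lp (n : ℕ) (k : ℝ) (hk : 0 ≤ k)
    {Y : Type*} [NormedAddCommGroup Y] [NormedSpace ℂ Y] [CompleteSpace Y]
    (w : EuclideanSpace ℝ (Fin n) → ℝ) (hw : ∀ x, w x = (1 + ‖x‖) ^ k)
    (p : ℝ≥0∞) (hp : 1 ≤ p) (hp' : p ≠ ∞)
    (f : EuclideanSpace ℝ (Fin n) → Y) (hf : AEStronglyMeasurable f volume)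
    (g : EuclideanSpace ℝ (Fin n) → ℂ) (hg : AEStronglyMeasurable g volume)
    (hfw : MemLp (fun x => ((w x)⁻¹ : ℂ) • f x) p volume)
    (hwg : MemLp (fun x => (w x : ℂ) * g x) 1 volume) :
    (∀ᵐ x : EuclideanSpace ℝ (Fin n) ∂volume, Integrable (fun y => g (x - y) • f y) volume) ∧
      MemLp (fun x => ((w x)⁻¹ : ℂ) • ∫ y, g (x - y) • f y) p volume ∧
      eLpNorm (fun x => ((w x)⁻¹ : ℂ) • ∫ y, g (x - y) • f y) p volume ≤
        eLpNorm (fun x => (w x : ℂ) * g x) 1 volume *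
          eLpNorm (fun x => ((w x)⁻¹ : ℂ) • f x) p volume := by
  have hwpos : ∀ x : EuclideanSpace ℝ (Fin n), 0 < w x := by
    intro x; rw [hw x]; positivity
  have hw1 : ∀ x : EuclideanSpace ℝ (Fin n), 1 ≤ w x := fun x => by
    rw [hw x]; exact Real.one_le_rpow (by linarith [norm_nonneg x]) hk
  have hsubw : ∀ x y : EuclideanSpace ℝ (Fin n), w y ≤ w (x - y) * w x := by
    intro x y
    rw [hw, hw, hw, ← Real.mul_rpow (by positivity) (by positivity)]
    apply Real.rpow_le_rpow (by positivity) ?_ hk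
    have h1 : ‖y‖ ≤ ‖x - y‖ + ‖x‖ := by
      calc ‖y‖ = ‖x - (x - y)‖ := by congr 1; abel
        _ ≤ ‖x‖ + ‖x - y‖ := norm_sub_le _ _
        _ = ‖x - y‖ + ‖x‖ := by ring
    nlinarith [norm_nonneg (x - y), norm_nonneg x, norm_nonneg y]
  have hnorm_inv : ∀ x : EuclideanSpace ℝ (Fin n), ‖((w x)⁻¹ : ℂ)‖ = (w x)⁻¹ := by
    intro x
    rw [norm_inv, Complex.norm_real, Real.norm_eq_abs, abs_of_pos (hwpos x)]
  have hnorm_mul : ∀ z : EuclideanSpace ℝ (Fin n), ‖(w z : ℂ) * g z‖ = w z * ‖g z‖ := by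
    intro z
    rw [norm_mul, Complex.norm_real, Real.norm_eq_abs, abs_of_pos (hwpos z)]
  -- real pointwise inequality
  have hptR : ∀ x y : EuclideanSpace ℝ (Fin n),
      ‖((w x)⁻¹ : ℂ)‖ * ‖g (x - y) • f y‖ ≤
        ‖(w (x - y) : ℂ) * g (x - y)‖ * ‖((w y)⁻¹ : ℂ) • f y‖ := by
    intro x y
    rw [hnorm_inv, norm_smul, norm_smul, hnorm_inv, hnorm_mul]
    have h2 : (w x)⁻¹ ≤ w (x - y) / w y := by
      rw [inv_eq_one_div, div_le_div_iff₀ (hwpos x) (hwpos y)]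
      calc 1 * w y = w y := one_mul _
        _ ≤ w (x - y) * w x := hsubw x y
    calc (w x)⁻¹ * (‖g (x - y)‖ * ‖f y‖)
        ≤ (w (x - y) / w y) * (‖g (x - y)‖ * ‖f y‖) :=
          mul_le_mul_of_nonneg_right h2 (by positivity)
      _ = w (x - y) * ‖g (x - y)‖ * ((w y)⁻¹ * ‖f y‖) := by
          rw [div_eq_mul_inv]; ring
  have hpt : ∀ x y : EuclideanSpace ℝ (Fin n),
      (‖((w x)⁻¹ : ℂ)‖₊ : ℝ≥0∞) * (‖g (x - y) • f y‖₊ : ℝ≥0∞) ≤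
        (‖(w (x - y) : ℂ) * g (x - y)‖₊ : ℝ≥0∞) * (‖((w y)⁻¹ : ℂ) • f y‖₊ : ℝ≥0∞) := by
    intro x y
    simp only [← enorm_eq_nnnorm]
    rw [← ofReal_norm, ← ofReal_norm, ← ofReal_norm,
      ← ofReal_norm, ← ENNReal.ofReal_mul (norm_nonneg _),
      ← ENNReal.ofReal_mul (norm_nonneg _)]
    exact ENNReal.ofReal_le_ofReal (hptR x y)
  -- measurable representatives
  have hGm : AEMeasurable (fun z => (‖(w z : ℂ) * g z‖₊ : ℝ≥0∞)) volume := hwg.1.enorm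
  have hFm : AEMeasurable (fun y => (‖((w y)⁻¹ : ℂ) • f y‖₊ : ℝ≥0∞)) volume := hfw.1.enorm
  obtain ⟨G, hGmk, hGeq⟩ : ∃ G : EuclideanSpace ℝ (Fin n) → ℝ≥0∞, Measurable G ∧
      (fun z => (‖(w z : ℂ) * g z‖₊ : ℝ≥0∞)) =ᵐ[volume] G :=
    ⟨hGm.mk _, hGm.measurable_mk, hGm.ae_eq_mk⟩
  obtain ⟨F, hFmk, hFeq⟩ : ∃ F : EuclideanSpace ℝ (Fin n) → ℝ≥0∞, Measurable F ∧
      (fun y => (‖((w y)⁻¹ : ℂ) • f y‖₊ : ℝ≥0∞)) =ᵐ[volume] F :=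
    ⟨hFm.mk _, hFm.measurable_mk, hFm.ae_eq_mk⟩
  have hGtrans : ∀ x : EuclideanSpace ℝ (Fin n),
      (fun y => (‖(w (x - y) : ℂ) * g (x - y)‖₊ : ℝ≥0∞)) =ᵐ[volume] fun y => G (x - y) := by
    intro x
    have h1 := (Measure.measurePreserving_sub_left volume x).quasiMeasurePreserving.ae_eq_comp
      hGeq
    simpa [Function.comp_def] using h1
  have hIC : ∀ x : EuclideanSpace ℝ (Fin n),
      ∫⁻ y, (‖(w (x - y) : ℂ) * g (x - y)‖₊ : ℝ≥0∞) * (‖((w y)⁻¹ : ℂ) • f y‖₊ : ℝ≥0∞) ∂volume =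
        ∫⁻ y, G (x - y) * F y ∂volume := by
    intro x
    apply lintegral_congr_ae
    filter_upwards [hGtrans x, hFeq] with y h1 h2
    rw [h1, ← h2]
  -- exponent
  set r : ℝ := p.toReal with hrdef
  have hp0 : p ≠ 0 := (lt_of_lt_of_le zero_lt_one hp).ne'
  have hr : 1 ≤ r := by
    rw [hrdef, ← ENNReal.toReal_one]
    exact ENNReal.toReal_mono hp' hp
  have hr0 : (0:ℝ) < r := lt_of_lt_of_le one_pos hr
  have hr0' : r ≠ 0 := hr0.ne'
  -- integrals of G, F
  have hGint : ∫⁻ z, G z ∂volume = eLpNorm (fun x => (w x : ℂ) * g x) 1 volume := by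
    rw [eLpNorm_one_eq_lintegral_enorm]
    exact (lintegral_congr_ae hGeq).symm
  have hFint : ∫⁻ y, F y ^ r ∂volume =
      ∫⁻ y, (‖((w y)⁻¹ : ℂ) • f y‖₊ : ℝ≥0∞) ^ r ∂volume := by
    apply lintegral_congr_ae
    filter_upwards [hFeq] with y h2
    rw [← h2]
  have hFsn : eLpNorm (fun x => ((w x)⁻¹ : ℂ) • f x) p volume =
      (∫⁻ y, F y ^ r ∂volume) ^ (1 / r) := by
    rw [hFint, eLpNorm_eq_lintegral_rpow_enorm_toReal hp0 hp']; rfl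
  have hy := young_aux n G F hGmk hFmk hr
  have hGfin : ∫⁻ z, G z ∂volume ≠ ⊤ := by rw [hGint]; exact hwg.2.ne
  have hFfin : ∫⁻ y, F y ^ r ∂volume ≠ ⊤ := by
    rw [hFint]
    exact (lintegral_rpow_enorm_lt_top_of_eLpNorm_lt_top hp0 hp' hfw.2).ne
  have hCfin : ∫⁻ x, (∫⁻ y, G (x - y) * F y ∂volume) ^ r ∂volume ≠ ⊤ := by
    refine (lt_of_le_of_lt hy ?_).ne
    exact ENNReal.mul_lt_top
      (ENNReal.rpow_lt_top_of_nonneg hr0.le hGfin) hFfin.lt_top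
  have hCmeas : Measurable fun x : EuclideanSpace ℝ (Fin n) =>
      ∫⁻ y, G (x - y) * F y ∂volume :=
    Measurable.lintegral_prod_right'
      ((hGmk.comp (measurable_fst.sub measurable_snd)).mul (hFmk.comp measurable_snd))
  have hae : ∀ᵐ x : EuclideanSpace ℝ (Fin n) ∂volume,
      (∫⁻ y, G (x - y) * F y ∂volume) < ⊤ := by
    have h1 := ae_lt_top (hCmeas.pow measurable_const) hCfin
    filter_upwards [h1] with x hx
    by_contra hcon
    rw [not_lt, top_le_iff] at hcon
    rw [hcon, ENNReal.top_rpow_of_pos hr0] at hx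
    exact absurd hx (lt_irrefl _)
  -- the coefficient
  have hcoef : ∀ x : EuclideanSpace ℝ (Fin n),
      (‖((w x)⁻¹ : ℂ)‖₊ : ℝ≥0∞) ≠ ⊤ := fun x => ENNReal.coe_ne_top
  have hcoef0 : ∀ x : EuclideanSpace ℝ (Fin n),
      (‖((w x)⁻¹ : ℂ)‖₊ : ℝ≥0∞) ≠ 0 := by
    intro x
    simp only [ne_eq, ENNReal.coe_eq_zero, nnnorm_eq_zero]
    intro hcon
    have := hnorm_inv x
    rw [hcon] at this
    simp only [norm_zero] at this
    exact absurd this.symm (inv_pos.mpr (hwpos x)).ne'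
  -- part 1
  have hint : ∀ᵐ x : EuclideanSpace ℝ (Fin n) ∂volume,
      Integrable (fun y => g (x - y) • f y) volume := by
    filter_upwards [hae] with x hx
    have hsm : AEStronglyMeasurable (fun y => g (x - y) • f y) volume := by
      have h1 : AEStronglyMeasurable (fun y : EuclideanSpace ℝ (Fin n) => g (x - y)) volume :=
        hg.comp_quasiMeasurePreserving
          (Measure.measurePreserving_sub_left volume x).quasiMeasurePreserving
      exact h1.smul hf
    refine ⟨hsm, ?_⟩
    have hb : ∫⁻ y, (‖g (x - y) • f y‖₊ : ℝ≥0∞) ∂volume ≤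
        (‖((w x)⁻¹ : ℂ)‖₊ : ℝ≥0∞)⁻¹ * ∫⁻ y, G (x - y) * F y ∂volume := by
      rw [← hIC x, ← lintegral_const_mul' _ _ (ENNReal.inv_ne_top.mpr (hcoef0 x))]
      apply lintegral_mono
      intro y
      calc (‖g (x - y) • f y‖₊ : ℝ≥0∞)
          = (‖((w x)⁻¹ : ℂ)‖₊ : ℝ≥0∞)⁻¹ *
            ((‖((w x)⁻¹ : ℂ)‖₊ : ℝ≥0∞) * (‖g (x - y) • f y‖₊ : ℝ≥0∞)) := by
            rw [← mul_assoc, ENNReal.inv_mul_cancel (hcoef0 x) (hcoef x), one_mul]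
        _ ≤ (‖((w x)⁻¹ : ℂ)‖₊ : ℝ≥0∞)⁻¹ *
            ((‖(w (x - y) : ℂ) * g (x - y)‖₊ : ℝ≥0∞) * (‖((w y)⁻¹ : ℂ) • f y‖₊ : ℝ≥0∞)) :=
            mul_le_mul_right (hpt x y) _
    rw [HasFiniteIntegral]
    refine lt_of_le_of_lt hb ?_
    exact ENNReal.mul_lt_top (ENNReal.inv_lt_top.mpr (pos_iff_ne_zero.mpr (hcoef0 x))) hx
  -- pointwise bound for the weighted convolution
  have hconv_bound : ∀ x : EuclideanSpace ℝ (Fin n),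
      (‖((w x)⁻¹ : ℂ) • ∫ y, g (x - y) • f y ∂volume‖₊ : ℝ≥0∞) ≤
        ∫⁻ y, G (x - y) * F y ∂volume := by
    intro x
    rw [nnnorm_smul, ENNReal.coe_mul]
    calc (‖((w x)⁻¹ : ℂ)‖₊ : ℝ≥0∞) * (‖∫ y, g (x - y) • f y ∂volume‖₊ : ℝ≥0∞)
        ≤ (‖((w x)⁻¹ : ℂ)‖₊ : ℝ≥0∞) * ∫⁻ y, (‖g (x - y) • f y‖₊ : ℝ≥0∞) ∂volume :=
          mul_le_mul_right (enorm_integral_le_lintegral_enorm _) _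
      _ = ∫⁻ y, (‖((w x)⁻¹ : ℂ)‖₊ : ℝ≥0∞) * (‖g (x - y) • f y‖₊ : ℝ≥0∞) ∂volume :=
          (lintegral_const_mul' _ _ (hcoef x)).symm
      _ ≤ ∫⁻ y, (‖(w (x - y) : ℂ) * g (x - y)‖₊ : ℝ≥0∞) * (‖((w y)⁻¹ : ℂ) • f y‖₊ : ℝ≥0∞) ∂volume :=
          lintegral_mono fun y => hpt x y
      _ = ∫⁻ y, G (x - y) * F y ∂volume := hIC x
  -- AE strong measurability of the convolution
  have hconv_meas : AEStronglyMeasurable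
      (fun x : EuclideanSpace ℝ (Fin n) => ∫ y, g (x - y) • f y ∂volume) volume := by
    have h0 := MeasureTheory.AEStronglyMeasurable.convolution_integrand
      ((ContinuousLinearMap.lsmul ℂ ℂ : ℂ →L[ℂ] Y →L[ℂ] Y).flip) hf hg
    have h1 := h0.integral_prod_right'
    simpa only [ContinuousLinearMap.flip_apply, ContinuousLinearMap.lsmul_apply] using h1
  have hwc : Continuous w := by
    have hfe : w = fun x => (1 + ‖x‖) ^ k := funext hw
    rw [hfe]
    apply Continuous.rpow_const (continuous_const.add continuous_norm)
    intro x
    left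
    exact (add_pos_of_pos_of_nonneg one_pos (norm_nonneg x)).ne'
  have hwinvc : Continuous fun x : EuclideanSpace ℝ (Fin n) => ((w x)⁻¹ : ℂ) :=
    (Complex.continuous_ofReal.comp hwc).inv₀ fun x =>
      Complex.ofReal_ne_zero.mpr (hwpos x).ne'
  have haesm : AEStronglyMeasurable
      (fun x : EuclideanSpace ℝ (Fin n) => ((w x)⁻¹ : ℂ) • ∫ y, g (x - y) • f y ∂volume)
      volume := hwinvc.aestronglyMeasurable.smul hconv_meas
  -- the eLpNorm bound
  have hmain : eLpNorm (fun x => ((w x)⁻¹ : ℂ) • ∫ y, g (x - y) • f y ∂volume) p volume ≤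
      eLpNorm (fun x => (w x : ℂ) * g x) 1 volume *
        eLpNorm (fun x => ((w x)⁻¹ : ℂ) • f x) p volume := by
    rw [eLpNorm_eq_lintegral_rpow_enorm_toReal hp0 hp']
    have h1 : ∫⁻ x, (‖((w x)⁻¹ : ℂ) • ∫ y, g (x - y) • f y ∂volume‖₊ : ℝ≥0∞) ^ r ∂volume ≤
        (∫⁻ z, G z ∂volume) ^ r * ∫⁻ y, F y ^ r ∂volume := by
      refine le_trans (lintegral_mono fun x => ?_) hy
      exact ENNReal.rpow_le_rpow (hconv_bound x) hr0.le
    calc (∫⁻ x, (‖((w x)⁻¹ : ℂ) • ∫ y, g (x - y) • f y ∂volume‖₊ : ℝ≥0∞) ^ r ∂volume) ^ (1 / r)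
        ≤ ((∫⁻ z, G z ∂volume) ^ r * ∫⁻ y, F y ^ r ∂volume) ^ (1 / r) :=
          ENNReal.rpow_le_rpow h1 (by positivity)
      _ = (∫⁻ z, G z ∂volume) * (∫⁻ y, F y ^ r ∂volume) ^ (1 / r) := by
          rw [ENNReal.mul_rpow_of_nonneg _ _ (by positivity), ← ENNReal.rpow_mul,
            mul_one_div, div_self hr0', ENNReal.rpow_one]
      _ = eLpNorm (fun x => (w x : ℂ) * g x) 1 volume *
            eLpNorm (fun x => ((w x)⁻¹ : ℂ) • f x) p volume := by
          rw [hGint, hFsn]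
  exact ⟨hint, ⟨haesm, lt_of_le_of_lt hmain (ENNReal.mul_lt_top hwg.2 hfw.2)⟩, hmain⟩
end

section
/- Fix 0 < α < π/2 and a bounded uniformly continuous f : ℝⁿ → Y with f/w bounded uniformly continuous, where w(x) = (1+‖x‖)^k, k ≥ 0. Then sup_x ‖(χ_ζ * f)(x) − f(x)‖/w(x) → 0 as ζ → 0 within the sector {ζ ≠ 0 : |arg ζ| < α}. -/
open MeasureTheory Real
open scoped ENNReal

lemma gauss_integrable (n : ℕ) {b : ℝ} (hb : 0 < b) :
    Integrable (fun v : EuclideanSpace ℝ (Fin n) => rexp (-b * ‖v‖ ^ 2)) := by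
  have h := (GaussianFourier.integrable_cexp_neg_mul_sq_norm_add
    (V := EuclideanSpace ℝ (Fin n)) (b := (b : ℂ)) (by simpa using hb) 0 0).norm
  refine h.congr ?_
  filter_upwards with v
  simp [Complex.norm_exp]
  left
  norm_cast

lemma gauss_integral (n : ℕ) {b : ℝ} (hb : 0 < b) :
    ∫ v : EuclideanSpace ℝ (Fin n), rexp (-b * ‖v‖ ^ 2) = (π / b) ^ ((n : ℝ) / 2) := by
  rw [GaussianFourier.integral_rexp_neg_mul_sq_norm hb, finrank_euclideanSpace_fin]

lemma chi_integral_one (n : ℕ) {ζ : ℂ} (hζ : ζ ≠ 0) (hre : 0 < (1/(4*ζ)).re) :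
    ∫ y : EuclideanSpace ℝ (Fin n),
      (4 * (π:ℂ) * ζ) ^ (-(n:ℂ)/2) * Complex.exp (-(‖y‖:ℂ)^2/(4*ζ)) = 1 := by
  have h4 : (4 * (π:ℂ) * ζ) ≠ 0 := by
    have : (π:ℂ) ≠ 0 := by exact_mod_cast Real.pi_ne_zero
    simp [hζ, this]
  have heq : ∀ y : EuclideanSpace ℝ (Fin n),
      Complex.exp (-(‖y‖:ℂ)^2/(4*ζ)) = Complex.exp (-(1/(4*ζ)) * (‖y‖:ℂ)^2) := by
    intro y; congr 1; field_simp
  rw [integral_const_mul]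
  simp_rw [heq]
  rw [GaussianFourier.integral_cexp_neg_mul_sq_norm hre]
  have hfr : (Module.finrank ℝ (EuclideanSpace ℝ (Fin n)) : ℂ) = (n : ℂ) := by
    norm_cast; exact finrank_euclideanSpace_fin
  rw [hfr]
  have hdiv : (π : ℂ) / (1/(4*ζ)) = 4 * π * ζ := by field_simp
  rw [hdiv, ← Complex.cpow_add _ _ h4]
  rw [show (-(n:ℂ)/2 + (n:ℂ)/2) = 0 by ring, Complex.cpow_zero]

lemma chi_norm (n : ℕ) {ζ : ℂ} (hζ : ζ ≠ 0) (y : EuclideanSpace ℝ (Fin n)) :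
    ‖(4 * (π:ℂ) * ζ) ^ (-(n:ℂ)/2) * Complex.exp (-(‖y‖:ℂ)^2/(4*ζ))‖
      = (4 * π * ‖ζ‖) ^ (-(n:ℝ)/2) * rexp (-((1/(4*ζ)).re * ‖y‖^2)) := by
  rw [show ‖(4 * (π:ℂ) * ζ) ^ (-(n:ℂ)/2) * Complex.exp (-(‖y‖:ℂ)^2/(4*ζ))‖
      = ‖(4 * (π:ℂ) * ζ) ^ (-(n:ℂ)/2)‖ * ‖Complex.exp (-(‖y‖:ℂ)^2/(4*ζ))‖
      from by rw [norm_mul]]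
  congr 1
  · rw [show (-(n:ℂ)/2) = ((-(n:ℝ)/2 : ℝ) : ℂ) by push_cast; ring,
      Complex.norm_cpow_real]
    congr 1
    simp [norm_mul, abs_of_nonneg Real.pi_pos.le]
  · rw [Complex.norm_exp]
    congr 1
    rw [show -(‖y‖:ℂ)^2/(4*ζ) = ((-‖y‖^2 : ℝ) : ℂ) * (1/(4*ζ)) by push_cast; ring,
      Complex.re_ofReal_mul]
    ring

lemma re_inv_ge {ζ : ℂ} (hζ : ζ ≠ 0) {α : ℝ} (hα : α < π/2) (harg : |Complex.arg ζ| < α) :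
    Real.cos α / (4 * ‖ζ‖) ≤ (1/(4*ζ)).re := by
  have habs : 0 < ‖ζ‖ := by simpa using hζ
  have h1 : (1/(4*ζ)).re = ζ.re / (4 * ‖ζ‖ ^ 2) := by
    rw [show (1/(4*ζ)) = (4*ζ)⁻¹ by ring, Complex.inv_re, Complex.normSq_eq_norm_sq]
    simp [Complex.mul_re, norm_mul]
    ring
  rw [h1]
  have hre : ζ.re = ‖ζ‖ * Real.cos (Complex.arg ζ) := by
    rw [Complex.cos_arg hζ]; field_simp
  have hcos : Real.cos α ≤ Real.cos (Complex.arg ζ) := by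
    rw [← Real.cos_abs (Complex.arg ζ)]
    apply Real.cos_le_cos_of_nonneg_of_le_pi (abs_nonneg _)
    · linarith [Real.pi_pos]
    · linarith
  rw [hre]
  rw [div_le_div_iff₀ (by positivity) (by positivity)]
  nlinarith [habs, hcos]

set_option maxHeartbeats 1000000 in
theorem gaussian_approx_identity_buc (n : ℕ) (k : ℝ) (hk : 0 ≤ k) (α : ℝ)
    (hα0 : 0 < α) (hα : α < π / 2)
    {Y : Type*} [NormedAddCommGroup Y] [NormedSpace ℂ Y] [CompleteSpace Y]
    (w : EuclideanSpace ℝ (Fin n) → ℝ) (hw : ∀ x, w x = (1 + ‖x‖) ^ k)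
    (g : EuclideanSpace ℝ (Fin n) → Y) (hgu : UniformContinuous g)
    (hgb : ∃ C, ∀ x, ‖g x‖ ≤ C)
    (f : EuclideanSpace ℝ (Fin n) → Y) (hf : ∀ x, f x = (w x : ℂ) • g x)
    (χ : ℂ → EuclideanSpace ℝ (Fin n) → ℂ)
    (hχ : ∀ ζ x, χ ζ x =
      (4 * (π : ℂ) * ζ) ^ (-(n : ℂ) / 2) * Complex.exp (-(‖x‖ : ℂ) ^ 2 / (4 * ζ))) :
    ∀ ε > 0, ∃ δ > 0, ∀ ζ : ℂ, ζ ≠ 0 → |Complex.arg ζ| < α → ‖ζ‖ < δ →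
      ⨆ x, ‖(∫ y, χ ζ y • f (x - y)) - f x‖ / w x < ε := by
  intro ε hε
  obtain ⟨C₀, hC₀⟩ := hgb
  set C := max C₀ 0 with hCdef
  have hC : ∀ x, ‖g x‖ ≤ C := fun x => le_trans (hC₀ x) (le_max_left _ _)
  have hC0 : (0:ℝ) ≤ C := le_max_right _ _
  have h1C : (0:ℝ) < 1 + C := by linarith
  have he1 : (0:ℝ) < Real.exp 1 := Real.exp_pos 1
  have hc : 0 < Real.cos α := Real.cos_pos_of_mem_Ioo ⟨by linarith, hα⟩
  set c := Real.cos α with hcdef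
  set M := (2/c) ^ ((n:ℝ)/2) with hMdef
  have hM : 0 < M := Real.rpow_pos_of_pos (by positivity) _
  -- weight facts
  have hw1 : ∀ z, 1 ≤ w z := by
    intro z; rw [hw]
    calc (1:ℝ) = 1 ^ k := (Real.one_rpow k).symm
    _ ≤ (1 + ‖z‖) ^ k := Real.rpow_le_rpow zero_le_one (by linarith [norm_nonneg z]) hk
  have hwpos : ∀ z, 0 < w z := fun z => lt_of_lt_of_le zero_lt_one (hw1 z)
  have hone_le : ∀ t : ℝ, 0 ≤ t → 1 ≤ (1 + t) ^ k := by
    intro t ht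
    calc (1:ℝ) = 1 ^ k := (Real.one_rpow k).symm
    _ ≤ (1 + t) ^ k := Real.rpow_le_rpow zero_le_one (by linarith) hk
  have hwmul : ∀ p q : EuclideanSpace ℝ (Fin n), w p ≤ w q * (1 + ‖p - q‖) ^ k := by
    intro p q
    rw [hw, hw, ← Real.mul_rpow (by positivity) (by positivity)]
    apply Real.rpow_le_rpow (by positivity) ?_ hk
    have h1 : ‖p‖ ≤ ‖q‖ + ‖p - q‖ := by
      have h0 : p = q + (p - q) := by abel
      calc ‖p‖ = ‖q + (p - q)‖ := by rw [← h0]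
      _ ≤ ‖q‖ + ‖p - q‖ := norm_add_le q (p - q)
    nlinarith [norm_nonneg q, norm_nonneg (p - q)]
  have hwmul' : ∀ x y : EuclideanSpace ℝ (Fin n), w (x - y) ≤ w x * (1 + ‖y‖) ^ k := by
    intro x y
    have := hwmul (x - y) x
    rwa [show x - y - x = -y by abel, norm_neg] at this
  have hwmul'' : ∀ x y : EuclideanSpace ℝ (Fin n), w x ≤ w (x - y) * (1 + ‖y‖) ^ k := by
    intro x y
    have := hwmul x (x - y)
    rwa [show x - (x - y) = y by abel] at this
  have hwsub : ∀ x y : EuclideanSpace ℝ (Fin n),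
      |w (x - y) - w x| ≤ w x * ((1 + ‖y‖) ^ k - 1) := by
    intro x y
    rw [abs_sub_le_iff]
    constructor
    · nlinarith [hwmul' x y]
    · rcases le_total (w (x - y)) (w x) with hle | hle
      · nlinarith [hwmul'' x y, hone_le ‖y‖ (norm_nonneg y), hwpos (x - y)]
      · nlinarith [hone_le ‖y‖ (norm_nonneg y), hwpos x]
  -- continuity
  have hgc : Continuous g := hgu.continuous
  have hwc : Continuous w := by
    rw [funext hw]
    exact (continuous_const.add continuous_norm).rpow_const (fun x => Or.inr hk)
  have hfc : Continuous f := by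
    rw [funext hf]
    exact (Complex.continuous_ofReal.comp hwc).smul hgc
  -- choose ε₁ and r
  set ε₁ := ε / (2 * Real.exp 1 * (1 + C) * M + 1) with hε₁def
  have hε₁ : 0 < ε₁ := by
    apply div_pos hε
    nlinarith [he1, hM, h1C, mul_pos (mul_pos he1 h1C) hM]
  obtain ⟨δu, hδu, hucg⟩ := Metric.uniformContinuous_iff.mp hgu ε₁ hε₁
  have hcont : ContinuousAt (fun t : ℝ => (1 + t) ^ k) 0 :=
    ((continuous_const.add continuous_id).continuousAt).rpow_const (Or.inr hk)
  have htends : Filter.Tendsto (fun t : ℝ => (1 + t) ^ k) (nhds 0) (nhds 1) := by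
    have := hcont.tendsto
    simpa using this
  have hev : ∀ᶠ t : ℝ in nhds 0, (1 + t) ^ k < 1 + ε₁ :=
    htends.eventually_lt_const (by linarith)
  obtain ⟨δ₂, hδ₂, hδ₂h⟩ := Metric.eventually_nhds_iff.mp hev
  set r := min (δu / 2) (δ₂ / 2) with hrdef
  have hr0 : 0 < r := lt_min (by linarith) (by linarith)
  have hgr : ∀ (x y : EuclideanSpace ℝ (Fin n)), ‖y‖ ≤ r → ‖g (x - y) - g x‖ ≤ ε₁ := by
    intro x y hy
    have hd : dist (x - y) x < δu := by
      rw [dist_eq_norm, show x - y - x = -y by abel, norm_neg]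
      calc ‖y‖ ≤ r := hy
      _ ≤ δu / 2 := min_le_left _ _
      _ < δu := by linarith
    have := hucg hd
    rw [dist_eq_norm] at this
    linarith
  have hwr : (1 + r) ^ k - 1 ≤ ε₁ := by
    have : (1 + r) ^ k < 1 + ε₁ := by
      apply hδ₂h
      rw [Real.dist_eq, sub_zero, abs_of_pos hr0]
      calc r ≤ δ₂ / 2 := min_le_right _ _
      _ < δ₂ := by linarith
    linarith
  -- choose a₀ and δ
  set η₀ := ε / (2 * (3 * C * Real.exp 1 * M) + 1) with hη₀def
  have hη₀ : 0 < η₀ := by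
    apply div_pos hε
    nlinarith [he1, hM, hC0, mul_nonneg (mul_nonneg (by linarith : (0:ℝ) ≤ 3 * C) he1.le) hM.le]
  set a₀ := max (k ^ 2 + 1) (4 / (r ^ 2 * η₀)) with ha₀def
  have ha₀1 : k ^ 2 + 1 ≤ a₀ := le_max_left _ _
  have ha₀2 : 4 / (r ^ 2 * η₀) ≤ a₀ := le_max_right _ _
  have ha₀pos : 0 < a₀ := lt_of_lt_of_le (by positivity) ha₀1
  refine ⟨c / (4 * a₀), by positivity, ?_⟩
  intro ζ hζ harg habsδ
  have habs0 : 0 < ‖ζ‖ := by simpa using hζ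
  set a := (1/(4*ζ)).re with hadef
  have hac : c / (4 * ‖ζ‖) ≤ a := re_inv_ge hζ hα harg
  have ha0 : 0 < a := lt_of_lt_of_le (by positivity) hac
  have haa₀ : a₀ < a := by
    have h1 : a₀ * (4 * ‖ζ‖) < c := by
      rw [lt_div_iff₀ (by positivity)] at habsδ
      nlinarith
    have h2 : a₀ < c / (4 * ‖ζ‖) := by
      rw [lt_div_iff₀ (by positivity)]
      linarith
    linarith [hac]
  have hak : k ^ 2 ≤ a := by nlinarith
  set N := (4 * π * ‖ζ‖) ^ (-(n:ℝ)/2) with hNdef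
  have hN0 : 0 < N := Real.rpow_pos_of_pos (by positivity) _
  set G := fun y : EuclideanSpace ℝ (Fin n) => N * rexp (-(a/2) * ‖y‖ ^ 2) with hGdef
  have hG0 : ∀ y, 0 ≤ G y := fun y => by positivity
  have hGint : Integrable G := (gauss_integrable n (half_pos ha0)).const_mul N
  have hGval : ∫ y, G y ≤ M := by
    rw [hGdef]
    rw [integral_const_mul, gauss_integral n (half_pos ha0)]
    rw [hNdef, hMdef]
    rw [show (-(n:ℝ)/2) = -((n:ℝ)/2) by ring, Real.rpow_neg (by positivity)]
    rw [inv_mul_le_iff₀ (Real.rpow_pos_of_pos (by positivity) _)]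
    rw [← Real.mul_rpow (by positivity) (by positivity)]
    apply Real.rpow_le_rpow (by positivity) ?_ (by positivity)
    -- π / (a/2) ≤ 2/c * (4π|ζ|)
    have hπ := Real.pi_pos
    have hac' : c ≤ a * (4 * ‖ζ‖) := (div_le_iff₀ (by positivity)).mp hac
    rw [div_le_iff₀ (by positivity : (0:ℝ) < a/2)]
    have hrh : 4 * π * ‖ζ‖ * (2 / c) * (a / 2) = a * (4 * ‖ζ‖) * π / c := by
      ring
    rw [hrh, le_div_iff₀ hc]
    nlinarith
  -- χ facts
  have hχnorm : ∀ y, ‖χ ζ y‖ = N * rexp (-(a * ‖y‖ ^ 2)) := by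
    intro y
    rw [hχ ζ y, chi_norm n hζ y]
  have hχcont : Continuous (χ ζ) := by
    rw [funext (hχ ζ)]
    exact continuous_const.mul (Complex.continuous_exp.comp
      ((((Complex.continuous_ofReal.comp continuous_norm).pow 2).neg).div_const _))
  -- key exponential inequalities
  have key1 : ∀ t : ℝ, 0 ≤ t →
      rexp (-(a * t ^ 2)) * (1 + t) ^ k ≤ Real.exp 1 * rexp (-(a/2) * t ^ 2) := by
    intro t ht
    have h1 : (1 + t) ^ k ≤ rexp (t * k) := by
      rw [Real.exp_mul]
      apply Real.rpow_le_rpow (by positivity) ?_ hk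
      linarith [Real.add_one_le_exp t]
    calc rexp (-(a * t ^ 2)) * (1 + t) ^ k ≤ rexp (-(a * t ^ 2)) * rexp (t * k) := by
          apply mul_le_mul_of_nonneg_left h1 (Real.exp_pos _).le
    _ = rexp (t * k - a * t ^ 2) := by rw [← Real.exp_add]; ring_nf
    _ ≤ Real.exp 1 * rexp (-(a/2) * t ^ 2) := by
        rw [← Real.exp_add]
        apply Real.exp_le_exp.mpr
        nlinarith [sq_nonneg (a * t - k), ha0, hak]
  have key2 : ∀ t : ℝ, r ≤ t →
      rexp (-(a * t ^ 2)) * (1 + t) ^ k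
        ≤ rexp (-(a * r ^ 2 / 4)) * Real.exp 1 * rexp (-(a/2) * t ^ 2) := by
    intro t ht
    have ht0 : 0 ≤ t := le_trans hr0.le ht
    have h1 : (1 + t) ^ k ≤ rexp (t * k) := by
      rw [Real.exp_mul]
      apply Real.rpow_le_rpow (by positivity) ?_ hk
      linarith [Real.add_one_le_exp t]
    calc rexp (-(a * t ^ 2)) * (1 + t) ^ k ≤ rexp (-(a * t ^ 2)) * rexp (t * k) := by
          apply mul_le_mul_of_nonneg_left h1 (Real.exp_pos _).le
    _ = rexp (t * k - a * t ^ 2) := by rw [← Real.exp_add]; ring_nf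
    _ ≤ rexp (-(a * r ^ 2 / 4)) * Real.exp 1 * rexp (-(a/2) * t ^ 2) := by
        rw [← Real.exp_add, ← Real.exp_add]
        apply Real.exp_le_exp.mpr
        nlinarith [sq_nonneg (a * t - 2 * k), ha0, hak, sq_nonneg t,
          mul_le_mul_of_nonneg_left (mul_le_mul ht ht hr0.le ht0) (le_of_lt (by positivity : (0:ℝ) < a/4))]
  -- coefficient
  set coef := ε₁ * (1 + C) * Real.exp 1 + 3 * C * Real.exp 1 * rexp (-(a * r ^ 2 / 4)) with hcoefdef
  have hcoef0 : 0 ≤ coef := by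
    rw [hcoefdef]
    have h8 : (0:ℝ) ≤ ε₁ * (1 + C) * Real.exp 1 :=
      mul_nonneg (mul_nonneg hε₁.le h1C.le) he1.le
    have h9 : (0:ℝ) ≤ 3 * C * Real.exp 1 * rexp (-(a * r ^ 2 / 4)) :=
      mul_nonneg (mul_nonneg (by linarith) he1.le) (Real.exp_pos _).le
    linarith
  have ha0' : 0 < (1/(4*ζ)).re := by rw [← hadef]; exact ha0
  clear_value coef G N a a₀ η₀ r ε₁ M c C
  -- norm of f
  have hfnorm : ∀ z, ‖f z‖ ≤ w z * C := by
    intro z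
    rw [hf z, norm_smul]
    simp only [Complex.norm_real, Real.norm_eq_abs, abs_of_pos (hwpos z)]
    exact mul_le_mul_of_nonneg_left (hC z) (hwpos z).le
  have hΔ : ∀ x y : EuclideanSpace ℝ (Fin n), ‖f (x - y) - f x‖
      ≤ w x * ((1 + ‖y‖) ^ k * ‖g (x - y) - g x‖ + ((1 + ‖y‖) ^ k - 1) * C) := by
    intro x y
    have hdecomp : f (x - y) - f x
        = ((w (x - y) : ℝ) : ℂ) • (g (x - y) - g x) + (((w (x - y) - w x : ℝ)) : ℂ) • g x := by
      rw [hf, hf]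
      push_cast
      rw [smul_sub, sub_smul]
      abel
    rw [hdecomp]
    calc ‖((w (x - y) : ℝ) : ℂ) • (g (x - y) - g x) + (((w (x - y) - w x : ℝ)) : ℂ) • g x‖
        ≤ ‖((w (x - y) : ℝ) : ℂ) • (g (x - y) - g x)‖ + ‖(((w (x - y) - w x : ℝ)) : ℂ) • g x‖ :=
          norm_add_le _ _
    _ = w (x - y) * ‖g (x - y) - g x‖ + |w (x - y) - w x| * ‖g x‖ := by
          rw [norm_smul, norm_smul, Complex.norm_real, Complex.norm_real,
            Real.norm_eq_abs, Real.norm_eq_abs, abs_of_pos (hwpos (x - y))]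
    _ ≤ (w x * (1 + ‖y‖) ^ k) * ‖g (x - y) - g x‖ + (w x * ((1 + ‖y‖) ^ k - 1)) * C := by
          apply add_le_add
          · exact mul_le_mul_of_nonneg_right (hwmul' x y) (norm_nonneg _)
          · exact mul_le_mul (hwsub x y) (hC x) (norm_nonneg _)
              (by nlinarith [hone_le ‖y‖ (norm_nonneg y), hwpos x])
    _ = w x * ((1 + ‖y‖) ^ k * ‖g (x - y) - g x‖ + ((1 + ‖y‖) ^ k - 1) * C) := by ring
  -- master pointwise bound
  have hmaster : ∀ x y : EuclideanSpace ℝ (Fin n),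
      ‖χ ζ y • (f (x - y) - f x)‖ ≤ w x * coef * G y := by
    intro x y
    rw [norm_smul, hχnorm]
    have hu : (0:ℝ) ≤ ‖y‖ := norm_nonneg y
    have h1u : (1:ℝ) ≤ (1 + ‖y‖) ^ k := hone_le _ hu
    rcases le_or_gt ‖y‖ r with hyr | hyr
    · -- small y
      have hdg : ‖g (x - y) - g x‖ ≤ ε₁ := hgr x y hyr
      have hks : (1 + ‖y‖) ^ k - 1 ≤ ε₁ := by
        have : (1 + ‖y‖) ^ k ≤ (1 + r) ^ k :=
          Real.rpow_le_rpow (by positivity) (by linarith) hk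
        linarith
      have hΔ' : ‖f (x - y) - f x‖ ≤ w x * (1 + ‖y‖) ^ k * (ε₁ * (1 + C)) := by
        calc ‖f (x - y) - f x‖
            ≤ w x * ((1 + ‖y‖) ^ k * ‖g (x - y) - g x‖ + ((1 + ‖y‖) ^ k - 1) * C) := hΔ x y
        _ ≤ w x * ((1 + ‖y‖) ^ k * ε₁ + ε₁ * C) := by
            apply mul_le_mul_of_nonneg_left ?_ (hwpos x).le
            apply add_le_add
            · exact mul_le_mul_of_nonneg_left hdg (by positivity)
            · exact mul_le_mul_of_nonneg_right hks hC0
        _ ≤ w x * (1 + ‖y‖) ^ k * (ε₁ * (1 + C)) := by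
            nlinarith [mul_le_mul_of_nonneg_left h1u
              (mul_nonneg (mul_nonneg (hwpos x).le hε₁.le) hC0)]
      calc N * rexp (-(a * ‖y‖ ^ 2)) * ‖f (x - y) - f x‖
          ≤ N * rexp (-(a * ‖y‖ ^ 2)) * (w x * (1 + ‖y‖) ^ k * (ε₁ * (1 + C))) := by
            apply mul_le_mul_of_nonneg_left hΔ' (mul_pos hN0 (Real.exp_pos _)).le
      _ = (rexp (-(a * ‖y‖ ^ 2)) * (1 + ‖y‖) ^ k) * (N * w x * ε₁ * (1 + C)) := by ring
      _ ≤ (Real.exp 1 * rexp (-(a/2) * ‖y‖ ^ 2)) * (N * w x * ε₁ * (1 + C)) := by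
            apply mul_le_mul_of_nonneg_right (key1 ‖y‖ hu)
              (mul_pos (mul_pos (mul_pos hN0 (hwpos x)) hε₁) h1C).le
      _ = w x * (ε₁ * (1 + C) * Real.exp 1) * G y := by rw [hGdef]; ring
      _ ≤ w x * coef * G y := by
            apply mul_le_mul_of_nonneg_right ?_ (hG0 y)
            apply mul_le_mul_of_nonneg_left ?_ (hwpos x).le
            rw [hcoefdef]
            have h9 : (0:ℝ) ≤ 3 * C * Real.exp 1 * rexp (-(a * r ^ 2 / 4)) :=
              mul_nonneg (mul_nonneg (by linarith) he1.le) (Real.exp_pos _).le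
            linarith
    · -- large y
      have hdg : ‖g (x - y) - g x‖ ≤ 2 * C := by
        calc ‖g (x - y) - g x‖ ≤ ‖g (x - y)‖ + ‖g x‖ := norm_sub_le _ _
        _ ≤ 2 * C := by linarith [hC (x - y), hC x]
      have hΔ' : ‖f (x - y) - f x‖ ≤ w x * (1 + ‖y‖) ^ k * (3 * C) := by
        calc ‖f (x - y) - f x‖
            ≤ w x * ((1 + ‖y‖) ^ k * ‖g (x - y) - g x‖ + ((1 + ‖y‖) ^ k - 1) * C) := hΔ x y
        _ ≤ w x * ((1 + ‖y‖) ^ k * (2 * C) + (1 + ‖y‖) ^ k * C) := by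
            apply mul_le_mul_of_nonneg_left ?_ (hwpos x).le
            apply add_le_add
            · exact mul_le_mul_of_nonneg_left hdg (by positivity)
            · exact mul_le_mul_of_nonneg_right (by linarith) hC0
        _ = w x * (1 + ‖y‖) ^ k * (3 * C) := by ring
      calc N * rexp (-(a * ‖y‖ ^ 2)) * ‖f (x - y) - f x‖
          ≤ N * rexp (-(a * ‖y‖ ^ 2)) * (w x * (1 + ‖y‖) ^ k * (3 * C)) := by
            apply mul_le_mul_of_nonneg_left hΔ' (mul_pos hN0 (Real.exp_pos _)).le
      _ = (rexp (-(a * ‖y‖ ^ 2)) * (1 + ‖y‖) ^ k) * (N * w x * (3 * C)) := by ring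
      _ ≤ (rexp (-(a * r ^ 2 / 4)) * Real.exp 1 * rexp (-(a/2) * ‖y‖ ^ 2)) * (N * w x * (3 * C)) := by
            apply mul_le_mul_of_nonneg_right (key2 ‖y‖ hyr.le)
              (mul_nonneg (mul_nonneg hN0.le (hwpos x).le) (by linarith))
      _ = w x * (3 * C * Real.exp 1 * rexp (-(a * r ^ 2 / 4))) * G y := by rw [hGdef]; ring
      _ ≤ w x * coef * G y := by
            apply mul_le_mul_of_nonneg_right ?_ (hG0 y)
            apply mul_le_mul_of_nonneg_left ?_ (hwpos x).le
            rw [hcoefdef]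
            have h9 : (0:ℝ) ≤ ε₁ * (1 + C) * Real.exp 1 :=
              mul_nonneg (mul_nonneg hε₁.le h1C.le) he1.le
            linarith
  -- integrability
  have hχint : Integrable (χ ζ) := by
    apply Integrable.mono' ((gauss_integrable n ha0).const_mul N)
      hχcont.aestronglyMeasurable
    filter_upwards with y
    rw [hχnorm]
    apply le_of_eq
    ring_nf
  have hint1 : ∀ x : EuclideanSpace ℝ (Fin n),
      Integrable (fun y => χ ζ y • f (x - y)) := by
    intro x
    apply Integrable.mono' (hGint.const_mul (Real.exp 1 * (w x * C)))
      ((hχcont.smul (hfc.comp (continuous_const.sub continuous_id))).aestronglyMeasurable)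
    filter_upwards with y
    show ‖χ ζ y • f (x - y)‖ ≤ _
    rw [norm_smul, hχnorm]
    calc N * rexp (-(a * ‖y‖ ^ 2)) * ‖f (x - y)‖
        ≤ N * rexp (-(a * ‖y‖ ^ 2)) * (w (x - y) * C) := by
          apply mul_le_mul_of_nonneg_left (hfnorm (x - y)) (mul_pos hN0 (Real.exp_pos _)).le
    _ ≤ N * rexp (-(a * ‖y‖ ^ 2)) * ((w x * (1 + ‖y‖) ^ k) * C) := by
          apply mul_le_mul_of_nonneg_left
            (mul_le_mul_of_nonneg_right (hwmul' x y) hC0) (mul_pos hN0 (Real.exp_pos _)).le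
    _ = (rexp (-(a * ‖y‖ ^ 2)) * (1 + ‖y‖) ^ k) * (N * w x * C) := by ring
    _ ≤ (Real.exp 1 * rexp (-(a/2) * ‖y‖ ^ 2)) * (N * w x * C) := by
          apply mul_le_mul_of_nonneg_right (key1 ‖y‖ (norm_nonneg y))
            (mul_nonneg (mul_nonneg hN0.le (hwpos x).le) hC0)
    _ = Real.exp 1 * (w x * C) * G y := by rw [hGdef]; ring
  have hint2 : ∀ x : EuclideanSpace ℝ (Fin n),
      Integrable (fun y => χ ζ y • (f (x - y) - f x)) := by
    intro x
    have := (hint1 x).sub (hχint.smul_const (f x))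
    refine this.congr ?_
    filter_upwards with y
    simp [smul_sub]
  have hone : (∫ y, χ ζ y) = 1 := by
    simp_rw [hχ ζ]
    exact chi_integral_one n hζ ha0'
  have hsplit : ∀ x : EuclideanSpace ℝ (Fin n),
      (∫ y, χ ζ y • f (x - y)) - f x = ∫ y, χ ζ y • (f (x - y) - f x) := by
    intro x
    simp_rw [smul_sub]
    rw [integral_sub (hint1 x) (hχint.smul_const (f x)), integral_smul_const, hone, one_smul]
  -- per-x bound
  have hxb : ∀ x : EuclideanSpace ℝ (Fin n),
      ‖(∫ y, χ ζ y • f (x - y)) - f x‖ / w x ≤ coef * M := by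
    intro x
    rw [hsplit x, div_le_iff₀ (hwpos x)]
    calc ‖∫ y, χ ζ y • (f (x - y) - f x)‖
        ≤ ∫ y, ‖χ ζ y • (f (x - y) - f x)‖ := norm_integral_le_integral_norm _
    _ ≤ ∫ y, w x * coef * G y :=
        integral_mono (hint2 x).norm (hGint.const_mul _) (fun y => hmaster x y)
    _ = w x * coef * ∫ y, G y := integral_const_mul _ _
    _ ≤ w x * coef * M := by
        apply mul_le_mul_of_nonneg_left hGval (mul_nonneg (hwpos x).le hcoef0)
    _ = coef * M * w x := by ring
  have hsup : (⨆ x, ‖(∫ y, χ ζ y • f (x - y)) - f x‖ / w x) ≤ coef * M := ciSup_le hxb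
  refine lt_of_le_of_lt hsup ?_
  -- final numeric estimate
  have hexp_small : rexp (-(a * r ^ 2 / 4)) ≤ η₀ := by
    have ht : 0 < a * r ^ 2 / 4 := by
      have h := mul_pos ha0 (pow_pos hr0 2); linarith only [h]
    have h1 : rexp (-(a * r ^ 2 / 4)) ≤ (a * r ^ 2 / 4)⁻¹ := by
      rw [Real.exp_neg]
      apply inv_anti₀ ht
      linarith only [Real.add_one_le_exp (a * r ^ 2 / 4)]
    have h3 : 4 / (r ^ 2 * η₀) ≤ a := le_trans ha₀2 haa₀.le
    have h3' : 4 ≤ a * (r ^ 2 * η₀) :=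
      (div_le_iff₀ (mul_pos (pow_pos hr0 2) hη₀)).mp h3
    have h6 : η₀⁻¹ ≤ a * r ^ 2 / 4 := by
      rw [inv_eq_one_div, div_le_iff₀ hη₀]
      linarith only [h3']
    have h2 : (a * r ^ 2 / 4)⁻¹ ≤ η₀ := inv_le_of_inv_le₀ hη₀ h6
    linarith only [h1, h2]
  have hden1 : (0:ℝ) < 2 * Real.exp 1 * (1 + C) * M + 1 := by
    have h := mul_pos (mul_pos (mul_pos two_pos he1) h1C) hM
    linarith only [h]
  have ht1 : ε₁ * (1 + C) * Real.exp 1 * M < ε / 2 := by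
    rw [hε₁def]
    rw [div_mul_eq_mul_div, div_mul_eq_mul_div, div_mul_eq_mul_div,
      div_lt_div_iff₀ hden1 two_pos]
    linarith only [hε]
  have ht2 : 3 * C * Real.exp 1 * rexp (-(a * r ^ 2 / 4)) * M ≤ ε / 2 := by
    have h3CeM : (0:ℝ) ≤ 3 * C * Real.exp 1 * M :=
      mul_nonneg (mul_nonneg (by linarith only [hC0]) he1.le) hM.le
    have h4 : 3 * C * Real.exp 1 * rexp (-(a * r ^ 2 / 4)) * M
        ≤ 3 * C * Real.exp 1 * M * η₀ := by
      have h := mul_le_mul_of_nonneg_left hexp_small h3CeM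
      linarith only [h]
    have hden2 : (0:ℝ) < 2 * (3 * C * Real.exp 1 * M) + 1 := by
      linarith only [h3CeM]
    have h5 : 3 * C * Real.exp 1 * M * η₀ ≤ ε / 2 := by
      rw [hη₀def]
      rw [mul_div_assoc']
      rw [div_le_div_iff₀ hden2 two_pos]
      linarith only [hε]
    linarith only [h4, h5]
  rw [hcoefdef]
  have : (ε₁ * (1 + C) * Real.exp 1 + 3 * C * Real.exp 1 * rexp (-(a * r ^ 2 / 4))) * M
      = ε₁ * (1 + C) * Real.exp 1 * M + 3 * C * Real.exp 1 * rexp (-(a * r ^ 2 / 4)) * M := by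
    ring
  rw [this]
  linarith only [ht1, ht2]
end

section
/- The map ζ ↦ w·χ_ζ from the open right half-plane to L¹(ℝⁿ, ℂ) is holomorphic, where w(x) = (1+‖x‖)^k with k ≥ 0; moreover its derivative at ζ is w·χ'_ζ, where χ'_ζ(x) = d/dζ χ_ζ(x), and ‖((χ_{ζ+h} − χ_ζ)/h − χ'_ζ)·w‖_{L¹} → 0 as h → 0. -/
open MeasureTheory Real Filter
open scoped ENNReal
open Real Complex

lemma gaussianHasDerivAt (R : ℂ) {z : ℂ} (hz : 0 < z.re) (s : ℂ) :
    HasDerivAt (fun z : ℂ => (4 * (π : ℂ) * z) ^ s * Complex.exp (-R / (4 * z)))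
      (s * (4 * (π : ℂ) * z) ^ (s - 1) * (4 * (π : ℂ)) * Complex.exp (-R / (4 * z))
        + (4 * (π : ℂ) * z) ^ s * (Complex.exp (-R / (4 * z)) * (R / (4 * z ^ 2)))) z := by
  have hz0 : z ≠ 0 := by
    intro h; rw [h] at hz; simp at hz
  have h1 : HasDerivAt (fun z : ℂ => 4 * (π : ℂ) * z) (4 * (π : ℂ)) z := by
    simpa using (hasDerivAt_id z).const_mul (4 * (π : ℂ))
  have hre : 0 < (4 * (π : ℂ) * z).re ∨ (4 * (π : ℂ) * z).im ≠ 0 := by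
    left
    have : (4 * (π : ℂ) * z).re = 4 * π * z.re := by
      simp [Complex.mul_re, Complex.mul_im]
    rw [this]
    positivity
  have hcp := h1.cpow_const (c := s) hre
  have h3 : HasDerivAt (fun z : ℂ => -R / (4 * z)) (R / (4 * z ^ 2)) z := by
    have h := (hasDerivAt_inv hz0).const_mul (-R / 4)
    have e1 : (fun z : ℂ => -R / 4 * z⁻¹) = fun z : ℂ => -R / (4 * z) := by
      funext y; ring
    rw [e1] at h
    exact h.congr_deriv (by ring)
  have h4 := h3.cexp
  exact hcp.mul h4
open Real Complex

lemma cpow_norm_le {z : ℂ} {r : ℝ} (hr : 0 < r) (hzre : r ≤ z.re) {y : ℝ} (hy : y ≤ 0) :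
    ‖(4 * (π : ℂ) * z) ^ (y : ℂ)‖ ≤ (4 * π * r) ^ y := by
  have h4 : (0:ℝ) < 4 * π * r := by positivity
  have habs : 4 * π * r ≤ ‖4 * (π : ℂ) * z‖ := by
    have h1 : (4 * (π : ℂ) * z).re = 4 * π * z.re := by
      simp [Complex.mul_re, Complex.mul_im]
    have h2 := Complex.re_le_norm (4 * (π : ℂ) * z)
    rw [h1] at h2
    nlinarith [Real.pi_pos]
  rw [Complex.norm_cpow_real]
  exact Real.rpow_le_rpow_of_nonpos h4 habs hy

lemma exp_norm_le {z : ℂ} {r K : ℝ} (hr : 0 < r) (hzre : r ≤ z.re) (hzK : ‖z‖ ≤ K)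
    (t : ℝ) : ‖Complex.exp (-(t:ℂ)^2 / (4 * z))‖ ≤ Real.exp (-(r / (4 * K^2)) * t^2) := by
  have hK : 0 < K := lt_of_lt_of_le hr (le_trans hzre ((Complex.re_le_norm z).trans hzK))
  have hns : 0 < Complex.normSq z := by
    have : z ≠ 0 := by
      intro h; rw [h] at hzre; simp at hzre; linarith
    exact Complex.normSq_pos.2 this
  rw [Complex.norm_exp]
  apply Real.exp_le_exp.2
  have hre : (-(t:ℂ)^2 / (4 * z)).re = -t^2 * ((4 * z)⁻¹).re := by
    rw [div_eq_mul_inv, show -(t:ℂ)^2 = ((-t^2 : ℝ) : ℂ) by push_cast; ring,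
      Complex.re_ofReal_mul]
  rw [hre]
  have hinv : ((4 * z)⁻¹).re = z.re / (4 * Complex.normSq z) := by
    rw [Complex.inv_re]
    have h1 : (4 * z).re = 4 * z.re := by simp [Complex.mul_re]
    have h2 : Complex.normSq (4 * z) = 16 * Complex.normSq z := by
      rw [Complex.normSq_mul]; norm_num [Complex.normSq]
    rw [h1, h2]; ring
  rw [hinv]
  have hnsK : Complex.normSq z ≤ K^2 := by
    rw [Complex.normSq_eq_norm_sq]
    exact pow_le_pow_left₀ (norm_nonneg z) hzK 2
  have hle : r / (4 * K^2) ≤ z.re / (4 * Complex.normSq z) :=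
    div_le_div₀ (le_trans hr.le hzre) hzre (by linarith) (by linarith)
  nlinarith [mul_le_mul_of_nonneg_left hle (sq_nonneg t)]


lemma phi_norm_le (n : ℕ) {z : ℂ} {r K : ℝ} (hr : 0 < r) (hzre : r ≤ z.re)
    (hzK : ‖z‖ ≤ K) (t : ℝ) :
    ‖(-(n:ℂ)/2) * (4*(π:ℂ)*z) ^ ((-(n:ℂ)/2) - 1) * (4*(π:ℂ)) * Complex.exp (-(t:ℂ)^2/(4*z))
      + (4*(π:ℂ)*z) ^ (-(n:ℂ)/2) * (Complex.exp (-(t:ℂ)^2/(4*z)) * ((t:ℂ)^2/(4*z^2)))‖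
    ≤ ((n/2 * (4*π) * (4*π*r) ^ (-(n:ℝ)/2 - 1)) + ((4*π*r) ^ (-(n:ℝ)/2) / (4*r^2)) * t^2)
        * Real.exp (-(r/(4*K^2)) * t^2) := by
  have hn0 : (0:ℝ) ≤ (n:ℝ) := Nat.cast_nonneg n
  have e1 : ((-(n:ℂ))/2 - 1) = ((-(n:ℝ)/2 - 1 : ℝ) : ℂ) := by push_cast; ring
  have e2 : (-(n:ℂ)/2) = ((-(n:ℝ)/2 : ℝ) : ℂ) := by push_cast; ring
  have hc1 : ‖(4*(π:ℂ)*z) ^ ((-(n:ℂ)/2) - 1)‖ ≤ (4*π*r) ^ (-(n:ℝ)/2 - 1) := by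
    rw [show (-(n:ℂ)/2 - 1) = ((-(n:ℝ)/2 - 1 : ℝ) : ℂ) by push_cast; ring]
    exact cpow_norm_le hr hzre (by linarith)
  have hc2 : ‖(4*(π:ℂ)*z) ^ (-(n:ℂ)/2)‖ ≤ (4*π*r) ^ (-(n:ℝ)/2) := by
    rw [e2]
    exact cpow_norm_le hr hzre (by linarith)
  have he := exp_norm_le hr hzre hzK t
  have hzr : r ≤ ‖z‖ := hzre.trans (Complex.re_le_norm z)
  have hdiv : ‖(t:ℂ)^2 / (4*z^2)‖ ≤ t^2 / (4*r^2) := by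
    rw [norm_div]
    have h1 : ‖(t:ℂ)^2‖ = t^2 := by
      rw [norm_pow, Complex.norm_real, Real.norm_eq_abs, _root_.sq_abs t]
    have h2 : ‖4*z^2‖ = 4 * ‖z‖^2 := by
      simp [norm_mul, norm_pow]
    rw [h1, h2]
    apply div_le_div₀ (sq_nonneg t) le_rfl (by positivity) (by nlinarith)
  have hn : ‖(-(n:ℂ)/2)‖ = (n:ℝ)/2 := by
    simp
  have h4a : ‖(4:ℂ)‖ = (4:ℝ) := by norm_num
  have hπa : ‖(π:ℂ)‖ = π := by
    rw [Complex.norm_real, Real.norm_eq_abs, abs_of_pos Real.pi_pos]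
  calc ‖_ + _‖ ≤ ‖(-(n:ℂ)/2) * (4*(π:ℂ)*z) ^ ((-(n:ℂ)/2) - 1) * (4*(π:ℂ)) *
            Complex.exp (-(t:ℂ)^2/(4*z))‖
        + ‖(4*(π:ℂ)*z) ^ (-(n:ℂ)/2) * (Complex.exp (-(t:ℂ)^2/(4*z)) * ((t:ℂ)^2/(4*z^2)))‖ :=
      norm_add_le _ _
    _ ≤ ((n:ℝ)/2 * (4*π*r) ^ (-(n:ℝ)/2 - 1) * (4*π)) * Real.exp (-(r/(4*K^2)) * t^2)
        + (4*π*r) ^ (-(n:ℝ)/2) * (Real.exp (-(r/(4*K^2)) * t^2) * (t^2/(4*r^2))) := by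
      simp only [norm_mul]
      rw [hn, h4a, hπa]
      gcongr <;> positivity
    _ = ((n/2 * (4*π) * (4*π*r) ^ (-(n:ℝ)/2 - 1)) + ((4*π*r) ^ (-(n:ℝ)/2) / (4*r^2)) * t^2)
        * Real.exp (-(r/(4*K^2)) * t^2) := by ring
open Real Complex MeasureTheory

lemma key_pointwise {k A B c : ℝ} (hk : 0 ≤ k) (hA : 0 ≤ A) (hB : 0 ≤ B) (hc : 0 < c)
    {t : ℝ} (ht : 0 ≤ t) :
    (1+t)^k * (2*((A + B*t^2) * Real.exp (-c*t^2)))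
      ≤ (2 * Real.exp (k^2/c) * (A + 4*B/c)) * Real.exp (-(c/2)*t^2) := by
  have hABt : (0:ℝ) ≤ A + B*t^2 := by positivity
  have h1 : (1+t)^k ≤ Real.exp (k*t) := by
    calc (1+t)^k ≤ (Real.exp t)^k :=
          Real.rpow_le_rpow (by linarith) (by linarith [Real.add_one_le_exp t]) hk
      _ = Real.exp (t*k) := by rw [← Real.exp_mul]
      _ = Real.exp (k*t) := by rw [mul_comm]
  have h2 : Real.exp (k*t) ≤ Real.exp (k^2/c) * Real.exp ((c/4)*t^2) := by
    rw [← Real.exp_add]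
    apply Real.exp_le_exp.2
    nlinarith [sq_nonneg (2*k - c*t), hc, div_mul_cancel₀ (k^2) hc.ne']
  have h3 : A + B*t^2 ≤ (A + 4*B/c) * Real.exp ((c/4)*t^2) := by
    have e1 : (1:ℝ) ≤ Real.exp ((c/4)*t^2) := Real.one_le_exp (by positivity)
    have e2 : (c/4)*t^2 ≤ Real.exp ((c/4)*t^2) := by
      linarith [Real.add_one_le_exp ((c/4)*t^2)]
    have e3 : B*t^2 ≤ (4*B/c) * Real.exp ((c/4)*t^2) := by
      have := mul_le_mul_of_nonneg_left e2 (show (0:ℝ) ≤ 4*B/c by positivity)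
      calc B*t^2 = (4*B/c) * ((c/4)*t^2) := by field_simp
        _ ≤ (4*B/c) * Real.exp ((c/4)*t^2) := this
    nlinarith [mul_le_mul_of_nonneg_left e1 hA]
  calc (1+t)^k * (2*((A + B*t^2) * Real.exp (-c*t^2)))
      ≤ Real.exp (k*t) * (2*((A + B*t^2) * Real.exp (-c*t^2))) := by
        apply mul_le_mul_of_nonneg_right h1 (by positivity)
    _ ≤ (Real.exp (k^2/c) * Real.exp ((c/4)*t^2)) *
          (2*(((A + 4*B/c) * Real.exp ((c/4)*t^2)) * Real.exp (-c*t^2))) := by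
        gcongr
    _ = (2 * Real.exp (k^2/c) * (A + 4*B/c)) *
          (Real.exp ((c/4)*t^2) * Real.exp ((c/4)*t^2) * Real.exp (-c*t^2)) := by ring
    _ = (2 * Real.exp (k^2/c) * (A + 4*B/c)) * Real.exp (-(c/2)*t^2) := by
        rw [← Real.exp_add, ← Real.exp_add]
        ring_nf

lemma integrable_gauss_bound (n : ℕ) {c : ℝ} (hc : 0 < c) (M : ℝ) :
    Integrable (fun x : EuclideanSpace ℝ (Fin n) => M * Real.exp (-(c/2)*‖x‖^2)) volume := by
  have h := (GaussianFourier.integrable_cexp_neg_mul_sq_norm_add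
    (V := EuclideanSpace ℝ (Fin n)) (b := ((c/2 : ℝ):ℂ)) (by simpa using by positivity)
    0 (0 : EuclideanSpace ℝ (Fin n))).norm
  have h0 : ∀ v : EuclideanSpace ℝ (Fin n),
      ‖Complex.exp (-((c/2:ℝ):ℂ) * (‖v‖:ℂ)^2 + 0 * (inner ℝ (0 : EuclideanSpace ℝ (Fin n)) v : ℝ))‖
        = Real.exp (-(c/2)*‖v‖^2) := by
    intro v
    rw [show -((c/2:ℝ):ℂ) * (‖v‖:ℂ)^2 + 0 * ((inner ℝ (0 : EuclideanSpace ℝ (Fin n)) v : ℝ) : ℂ)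
        = ((-(c/2)*‖v‖^2 : ℝ) : ℂ) by push_cast; ring]
    rw [Complex.norm_exp_ofReal]
  have : (fun v : EuclideanSpace ℝ (Fin n) =>
      ‖Complex.exp (-((c/2:ℝ):ℂ) * (‖v‖:ℂ)^2 + 0 * (inner ℝ (0 : EuclideanSpace ℝ (Fin n)) v : ℝ))‖)
      = fun v => Real.exp (-(c/2)*‖v‖^2) := funext h0
  rw [this] at h
  exact h.const_mul M


/-- The map `ζ ↦ w·χ_ζ` is holomorphic from the open right half-plane into
`L¹(ℝⁿ, ℂ)`: at every `ζ` with `Re ζ > 0`, the difference quotients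
`(χ_{ζ+h} − χ_ζ)/h` converge in the weighted `L¹` norm to the pointwise
`ζ`-derivative `χ'_ζ`, i.e. the `L¹`-derivative of `ζ ↦ w·χ_ζ` is `w·χ'_ζ`. -/
theorem weighted_gaussian_holomorphic_L1 (n : ℕ) (k : ℝ) (hk : 0 ≤ k)
    (w : EuclideanSpace ℝ (Fin n) → ℝ) (hw : ∀ x, w x = (1 + ‖x‖) ^ k)
    (χ : ℂ → EuclideanSpace ℝ (Fin n) → ℂ)
    (hχ : ∀ ζ x, χ ζ x =
      (4 * (π : ℂ) * ζ) ^ (-(n : ℂ) / 2) * Complex.exp (-(‖x‖ : ℂ) ^ 2 / (4 * ζ)))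
    (χ' : ℂ → EuclideanSpace ℝ (Fin n) → ℂ)
    (hχ' : ∀ ζ x, χ' ζ x = deriv (fun z => χ z x) ζ)
    (ζ : ℂ) (hζ : 0 < ζ.re) :
    Tendsto (fun h : ℂ =>
        eLpNorm (fun x => (w x : ℂ) * ((χ (ζ + h) x - χ ζ x) / h - χ' ζ x)) 1 volume)
      (nhdsWithin 0 {0}ᶜ) (nhds 0) := by
  have hπ := Real.pi_pos
  set φ : ℂ → EuclideanSpace ℝ (Fin n) → ℂ := fun z x =>
    (-(n:ℂ)/2) * (4*(π:ℂ)*z) ^ ((-(n:ℂ)/2) - 1) * (4*(π:ℂ)) * Complex.exp (-(‖x‖:ℂ)^2/(4*z))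
    + (4*(π:ℂ)*z) ^ (-(n:ℂ)/2) * (Complex.exp (-(‖x‖:ℂ)^2/(4*z)) * ((‖x‖:ℂ)^2/(4*z^2)))
    with hφdef
  have key : ∀ (x : EuclideanSpace ℝ (Fin n)) (z : ℂ), 0 < z.re →
      HasDerivAt (fun z => χ z x) (φ z x) z := by
    intro x z hz
    have hfun : (fun z => χ z x) = fun z : ℂ =>
        (4 * (π : ℂ) * z) ^ (-(n : ℂ) / 2) * Complex.exp (-(‖x‖ : ℂ) ^ 2 / (4 * z)) :=
      funext fun z => hχ z x
    rw [hfun]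
    exact gaussianHasDerivAt ((‖x‖:ℂ)^2) hz (-(n:ℂ)/2)
  have hχ'eq : ∀ x, χ' ζ x = φ ζ x := fun x => by
    rw [hχ' ζ x, (key x ζ hζ).deriv]
  set r : ℝ := ζ.re/2 with hrdef
  have hr : 0 < r := half_pos hζ
  set K : ℝ := ‖ζ‖ + r with hKdef
  have hK : 0 < K := by positivity
  set c : ℝ := r/(4*K^2) with hcdef
  have hc : 0 < c := by positivity
  set A : ℝ := (n:ℝ)/2 * (4*π) * (4*π*r) ^ (-(n:ℝ)/2 - 1) with hAdef
  set B : ℝ := (4*π*r) ^ (-(n:ℝ)/2) / (4*r^2) with hBdef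
  have hA : 0 ≤ A := by positivity
  have hB : 0 ≤ B := by positivity
  set D : EuclideanSpace ℝ (Fin n) → ℝ :=
    fun x => (A + B*‖x‖^2) * Real.exp (-c*‖x‖^2) with hDdef
  have hD0 : ∀ x, 0 ≤ D x := by
    intro x
    have h1 : (0:ℝ) ≤ A + B*‖x‖^2 := by positivity
    exact mul_nonneg h1 (Real.exp_pos _).le
  have hball : ∀ z ∈ Metric.closedBall ζ r, r ≤ z.re ∧ ‖z‖ ≤ K := by
    intro z hz
    rw [Metric.mem_closedBall, Complex.dist_eq] at hz
    constructor
    · have h1 := Complex.abs_re_le_norm (z - ζ)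
      have hre : (z-ζ).re = z.re - ζ.re := by simp
      rw [hre] at h1
      have h2 := abs_le.mp (h1.trans hz)
      rw [hrdef] at *
      linarith [h2.1]
    · calc ‖z‖ = ‖ζ + (z - ζ)‖ := by ring_nf
        _ ≤ ‖ζ‖ + ‖z-ζ‖ := norm_add_le _ _
        _ ≤ K := by rw [hKdef]; linarith
  have hφle : ∀ (x : EuclideanSpace ℝ (Fin n)), ∀ z ∈ Metric.closedBall ζ r,
      ‖φ z x‖ ≤ D x := by
    intro x z hz
    obtain ⟨h1, h2⟩ := hball z hz
    exact phi_norm_le n hr h1 h2 ‖x‖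
  have hquot : ∀ (x : EuclideanSpace ℝ (Fin n)) (h : ℂ), ‖h‖ ≤ r → h ≠ 0 →
      ‖(w x:ℂ) * ((χ (ζ+h) x - χ ζ x)/h - χ' ζ x)‖ ≤ w x * (2 * D x) := by
    intro x h hhr hh0
    have hmem : ζ + h ∈ Metric.closedBall ζ r := by
      simp only [Metric.mem_closedBall, Complex.dist_eq, add_sub_cancel_left]
      exact hhr
    have hmemζ : ζ ∈ Metric.closedBall ζ r := Metric.mem_closedBall_self hr.le
    have hder : ∀ z ∈ Metric.closedBall ζ r,
        HasDerivWithinAt (fun z => χ z x) (φ z x) (Metric.closedBall ζ r) z := by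
      intro z hz
      exact (key x z (lt_of_lt_of_le hr (hball z hz).1)).hasDerivWithinAt
    have hmvt := (convex_closedBall ζ r).norm_image_sub_le_of_norm_hasDerivWithin_le
      hder (fun z hz => hφle x z hz) hmemζ hmem
    have hq : ‖(χ (ζ+h) x - χ ζ x)/h‖ ≤ D x := by
      rw [norm_div, div_le_iff₀ (norm_pos_iff.mpr hh0)]
      calc ‖χ (ζ+h) x - χ ζ x‖ ≤ D x * ‖ζ + h - ζ‖ := hmvt
        _ = D x * ‖h‖ := by rw [add_sub_cancel_left]
    have hφζ : ‖χ' ζ x‖ ≤ D x := by rw [hχ'eq x]; exact hφle x ζ hmemζ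
    have hw0 : 0 ≤ w x := by rw [hw]; positivity
    calc ‖(w x:ℂ) * ((χ (ζ+h) x - χ ζ x)/h - χ' ζ x)‖
        = w x * ‖(χ (ζ+h) x - χ ζ x)/h - χ' ζ x‖ := by
          rw [norm_mul, Complex.norm_real, Real.norm_eq_abs, _root_.abs_of_nonneg hw0]
      _ ≤ w x * (2 * D x) := by
          apply mul_le_mul_of_nonneg_left _ hw0
          calc ‖(χ (ζ+h) x - χ ζ x)/h - χ' ζ x‖
              ≤ ‖(χ (ζ+h) x - χ ζ x)/h‖ + ‖χ' ζ x‖ := norm_sub_le _ _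
            _ ≤ D x + D x := add_le_add hq hφζ
            _ = 2 * D x := by ring
  -- continuity
  have hwc : Continuous w := by
    have : w = fun x => (1+‖x‖)^k := funext hw
    rw [this]
    exact (continuous_const.add continuous_norm).rpow_const (fun x => Or.inr hk)
  have hnormC : Continuous fun x : EuclideanSpace ℝ (Fin n) => (‖x‖:ℂ) :=
    Complex.continuous_ofReal.comp continuous_norm
  have hexpC : ∀ z : ℂ, Continuous fun x : EuclideanSpace ℝ (Fin n) =>
      Complex.exp (-(‖x‖:ℂ)^2/(4*z)) := by
    intro z
    exact Complex.continuous_exp.comp (((hnormC.pow 2).neg).div_const _)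
  have hgauss : ∀ z : ℂ, Continuous fun x : EuclideanSpace ℝ (Fin n) => χ z x := by
    intro z
    have : (fun x : EuclideanSpace ℝ (Fin n) => χ z x) = fun x =>
        (4*(π:ℂ)*z)^(-(n:ℂ)/2) * Complex.exp (-(‖x‖:ℂ)^2/(4*z)) := funext fun x => hχ z x
    rw [this]
    exact continuous_const.mul (hexpC z)
  have hχ'c : Continuous fun x : EuclideanSpace ℝ (Fin n) => χ' ζ x := by
    have : (fun x : EuclideanSpace ℝ (Fin n) => χ' ζ x) = fun x => φ ζ x := funext hχ'eq
    rw [this, hφdef]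
    exact (continuous_const.mul (hexpC ζ)).add
      (continuous_const.mul ((hexpC ζ).mul ((hnormC.pow 2).div_const _)))
  have hcont : ∀ h : ℂ, Continuous fun x : EuclideanSpace ℝ (Fin n) =>
      (w x:ℂ) * ((χ (ζ+h) x - χ ζ x)/h - χ' ζ x) := by
    intro h
    exact (Complex.continuous_ofReal.comp hwc).mul
      ((((hgauss (ζ+h)).sub (hgauss ζ)).div_const h).sub hχ'c)
  -- integrable bound
  have hbint : Integrable (fun x : EuclideanSpace ℝ (Fin n) => w x * (2 * D x)) volume := by
    apply (integrable_gauss_bound n hc (2 * Real.exp (k^2/c) * (A + 4*B/c))).mono'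
    · apply Continuous.aestronglyMeasurable
      apply hwc.mul (continuous_const.mul ?_)
      exact ((continuous_const.add (continuous_const.mul (continuous_norm.pow 2))).mul
        (Real.continuous_exp.comp ((continuous_const.mul (continuous_norm.pow 2)))))
    · apply ae_of_all
      intro x
      have hw0 : 0 ≤ w x := by rw [hw]; positivity
      rw [Real.norm_eq_abs, _root_.abs_of_nonneg (mul_nonneg hw0 (by linarith [hD0 x]))]
      rw [hw x, hDdef]
      exact key_pointwise hk hA hB hc (norm_nonneg x)
  -- main convergence
  simp_rw [eLpNorm_one_eq_lintegral_enorm]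
  simp_rw [enorm_eq_nnnorm]
  have hmain := tendsto_lintegral_filter_of_dominated_convergence
    (μ := (volume : Measure (EuclideanSpace ℝ (Fin n))))
    (l := nhdsWithin (0:ℂ) {0}ᶜ)
    (F := fun h x => (‖(w x:ℂ) * ((χ (ζ+h) x - χ ζ x)/h - χ' ζ x)‖₊ : ℝ≥0∞))
    (f := fun _ => 0)
    (fun x => ENNReal.ofReal (w x * (2 * D x)))
    (Eventually.of_forall fun h => ((hcont h).measurable.nnnorm.coe_nnreal_ennreal))
    ?_ ?_ ?_
  · simpa using hmain
  · -- bound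
    have h1 : ∀ᶠ h : ℂ in nhdsWithin 0 {0}ᶜ, ‖h‖ ≤ r := by
      apply eventually_nhdsWithin_of_eventually_nhds
      filter_upwards [Metric.closedBall_mem_nhds (0:ℂ) hr] with h hh
      exact mem_closedBall_zero_iff.mp hh
    have h2 : ∀ᶠ h : ℂ in nhdsWithin 0 {0}ᶜ, h ≠ 0 := by
      filter_upwards [self_mem_nhdsWithin] with h hh
      exact hh
    filter_upwards [h1, h2] with h hh1 hh2
    apply ae_of_all
    intro x
    rw [← enorm_eq_nnnorm, ← ofReal_norm]
    exact ENNReal.ofReal_le_ofReal (hquot x h hh1 hh2)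
  · -- finiteness
    exact hbint.lintegral_lt_top.ne
  · -- pointwise limit
    apply ae_of_all
    intro x
    have hd := key x ζ hζ
    rw [hasDerivAt_iff_tendsto_slope] at hd
    have hmap : Tendsto (fun h : ℂ => ζ + h) (nhdsWithin 0 {0}ᶜ) (nhdsWithin ζ {ζ}ᶜ) := by
      rw [tendsto_nhdsWithin_iff]
      constructor
      · have h0 : Tendsto (fun h : ℂ => ζ + h) (nhds 0) (nhds ζ) := by
          exact (continuous_const_add ζ).tendsto' (0:ℂ) ζ (by simp)
        exact h0.mono_left nhdsWithin_le_nhds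
      · filter_upwards [self_mem_nhdsWithin] with h hh
        simp only [Set.mem_compl_iff, Set.mem_singleton_iff] at hh ⊢
        intro hcontra
        exact hh (add_eq_left.mp hcontra)
    have hslope := hd.comp hmap
    rw [show (slope (fun z => χ z x) ζ) ∘ (fun h : ℂ => ζ + h)
        = fun h : ℂ => (χ (ζ+h) x - χ ζ x)/h from funext fun h => by
          rw [Function.comp_apply, slope_def_field, add_sub_cancel_left]] at hslope
    have hzero : Tendsto (fun h : ℂ => (w x:ℂ) * ((χ (ζ+h) x - χ ζ x)/h - χ' ζ x))
        (nhdsWithin 0 {0}ᶜ) (nhds 0) := by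
      have h1 := hslope.sub_const (χ' ζ x)
      rw [show φ ζ x - χ' ζ x = 0 from by rw [hχ'eq x, sub_self]] at h1
      simpa using h1.const_mul ((w x : ℂ))
    have hnn := hzero.nnnorm
    rw [nnnorm_zero] at hnn
    simpa using ENNReal.tendsto_coe.mpr hnn
end
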